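/- arXiv:1909.09518 — 4 statements merged into one kernel-verified Lean document; each statement's English description precedes it below -/
import Mathlib

section
/- Let T ∈ A ⊗ B ⊗ C with dim A = dim B = dim C = m be 1_A-generic, i.e., the induced map T_A: A* → B ⊗ C contains a full-rank element in its image. Then dim G_T ≤ 2m² − m − 1, and equality holds if and only if T is isomorphic to T₀ = a₁ ⊗ (Σ_{j=1}^m b_j ⊗ c_j). -/
open scoped BigOperators

/-- Leibniz-rule action; its kernel is the annihilator `g̃_T` of `T`, and
`dim G_T = dim g̃_T − 2`. -/
noncomputable def tensorActionL (a b c : ℕ) (T : Fin a → Fin b → Fin c → ℂ) :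
    (Matrix (Fin a) (Fin a) ℂ × Matrix (Fin b) (Fin b) ℂ × Matrix (Fin c) (Fin c) ℂ) →ₗ[ℂ]
      (Fin a → Fin b → Fin c → ℂ) where
  toFun p := fun i j k =>
    (∑ i', p.1 i i' * T i' j k) + (∑ j', p.2.1 j j' * T i j' k) +
      (∑ k', p.2.2 k k' * T i j k')
  map_add' p q := by
    funext i j k
    simp only [Prod.fst_add, Prod.snd_add, Matrix.add_apply, add_mul,
      Finset.sum_add_distrib, Pi.add_apply]
    ring
  map_smul' t p := by
    funext i j k
    simp only [Prod.smul_fst, Prod.smul_snd, Matrix.smul_apply, smul_eq_mul,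
      RingHom.id_apply, Pi.smul_apply, Finset.mul_sum, mul_add, mul_assoc]


/-- The contraction `T_A(α) ∈ B ⊗ C` of `T` against `α ∈ A*`, as a matrix. -/
noncomputable def contractA (a b c : ℕ) (T : Fin a → Fin b → Fin c → ℂ) (α : Fin a → ℂ) :
    Matrix (Fin b) (Fin c) ℂ :=
  Matrix.of fun j k => ∑ i, α i * T i j k

/-- `T` is `1_A`-generic if `T_A(A*)` contains a full rank element. -/
def OneAGeneric (m : ℕ) (T : Fin m → Fin m → Fin m → ℂ) : Prop :=
  ∃ α : Fin m → ℂ, IsUnit (contractA m m m T α).det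

/-- The orbit of a tensor `T` under `GL_a × GL_b × GL_c`; two tensors are
isomorphic iff they lie in the same orbit. -/
def glOrbit (a b c : ℕ) (T : Fin a → Fin b → Fin c → ℂ) :
    Set (Fin a → Fin b → Fin c → ℂ) :=
  {S | ∃ (g : Matrix (Fin a) (Fin a) ℂ) (h : Matrix (Fin b) (Fin b) ℂ)
        (l : Matrix (Fin c) (Fin c) ℂ), IsUnit g.det ∧ IsUnit h.det ∧ IsUnit l.det ∧
      S = fun i j k => ∑ i', ∑ j', ∑ k', g i i' * h j j' * l k k' * T i' j' k'}


namespace OneAG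
abbrev Mat (m : ℕ) := Matrix (Fin m) (Fin m) ℂ
abbrev Ten (m : ℕ) := Fin m → Fin m → Fin m → ℂ

variable {m : ℕ}

noncomputable def actA (g : Mat m) (T : Ten m) : Ten m := fun i j k => ∑ i', g i i' * T i' j k
noncomputable def actB (h : Mat m) (T : Ten m) : Ten m := fun i j k => ∑ j', h j j' * T i j' k
noncomputable def actC (l : Mat m) (T : Ten m) : Ten m := fun i j k => ∑ k', l k k' * T i j k'
noncomputable def act (g h l : Mat m) (T : Ten m) : Ten m :=
  fun i j k => ∑ i', ∑ j', ∑ k', g i i' * h j j' * l k k' * T i' j' k'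

lemma act_eq (g h l : Mat m) (T : Ten m) : act g h l T = actA g (actB h (actC l T)) := by
  funext i j k
  simp only [act, actA, actB, actC, Finset.mul_sum]
  refine Finset.sum_congr rfl fun i' _ => Finset.sum_congr rfl fun j' _ =>
    Finset.sum_congr rfl fun k' _ => by ring

lemma actA_actA (g g' : Mat m) (T : Ten m) : actA g (actA g' T) = actA (g * g') T := by
  funext i j k
  simp only [actA, Finset.mul_sum]
  rw [Finset.sum_comm]
  refine Finset.sum_congr rfl fun p _ => ?_
  rw [Matrix.mul_apply, Finset.sum_mul]
  exact Finset.sum_congr rfl fun i' _ => by ring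

lemma actB_actB (g g' : Mat m) (T : Ten m) : actB g (actB g' T) = actB (g * g') T := by
  funext i j k
  simp only [actB, Finset.mul_sum]
  rw [Finset.sum_comm]
  refine Finset.sum_congr rfl fun p _ => ?_
  rw [Matrix.mul_apply, Finset.sum_mul]
  exact Finset.sum_congr rfl fun i' _ => by ring

lemma actC_actC (g g' : Mat m) (T : Ten m) : actC g (actC g' T) = actC (g * g') T := by
  funext i j k
  simp only [actC, Finset.mul_sum]
  rw [Finset.sum_comm]
  refine Finset.sum_congr rfl fun p _ => ?_
  rw [Matrix.mul_apply, Finset.sum_mul]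
  exact Finset.sum_congr rfl fun i' _ => by ring

lemma actA_actB (g h : Mat m) (T : Ten m) : actA g (actB h T) = actB h (actA g T) := by
  funext i j k
  simp only [actA, actB, Finset.mul_sum]
  rw [Finset.sum_comm]
  exact Finset.sum_congr rfl fun p _ => Finset.sum_congr rfl fun q _ => by ring

lemma actA_actC (g h : Mat m) (T : Ten m) : actA g (actC h T) = actC h (actA g T) := by
  funext i j k
  simp only [actA, actC, Finset.mul_sum]
  rw [Finset.sum_comm]
  exact Finset.sum_congr rfl fun p _ => Finset.sum_congr rfl fun q _ => by ring

lemma actB_actC (g h : Mat m) (T : Ten m) : actB g (actC h T) = actC h (actB g T) := by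
  funext i j k
  simp only [actB, actC, Finset.mul_sum]
  rw [Finset.sum_comm]
  exact Finset.sum_congr rfl fun p _ => Finset.sum_congr rfl fun q _ => by ring

lemma actA_one (T : Ten m) : actA 1 T = T := by
  funext i j k
  simp [actA, Matrix.one_apply, Finset.sum_ite_eq, ite_mul]

lemma actB_one (T : Ten m) : actB 1 T = T := by
  funext i j k
  simp [actB, Matrix.one_apply, Finset.sum_ite_eq, ite_mul]

lemma actC_one (T : Ten m) : actC 1 T = T := by
  funext i j k
  simp [actC, Matrix.one_apply, Finset.sum_ite_eq, ite_mul]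

lemma act_act (g h l g' h' l' : Mat m) (T : Ten m) :
    act g h l (act g' h' l' T) = act (g * g') (h * h') (l * l') T := by
  rw [act_eq, act_eq, act_eq]
  simp only [← actA_actC, ← actA_actB, ← actB_actC, actA_actA, actB_actB, actC_actC]

lemma act_one (T : Ten m) : act 1 1 1 T = T := by
  rw [act_eq, actA_one, actB_one, actC_one]



variable {m : ℕ}

lemma act_add (g h l : Mat m) (S T : Ten m) :
    act g h l (S + T) = act g h l S + act g h l T := by
  funext i j k
  simp [act, mul_add, Finset.sum_add_distrib]

lemma act_smul (g h l : Mat m) (t : ℂ) (T : Ten m) :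
    act g h l (t • T) = t • act g h l T := by
  funext i j k
  simp [act, Finset.mul_sum, mul_left_comm _ t]

noncomputable def actL (g h l : Mat m) : Ten m →ₗ[ℂ] Ten m where
  toFun := act g h l
  map_add' := act_add g h l
  map_smul' := act_smul g h l

lemma tensorActionL_apply (T : Ten m) (X Y Z : Mat m) :
    tensorActionL m m m T (X, Y, Z) = actA X T + actB Y T + actC Z T := rfl

lemma key (g h l : Mat m) (hg : IsUnit g.det) (hh : IsUnit h.det) (hl : IsUnit l.det)
    (T : Ten m) (X Y Z : Mat m) :
    tensorActionL m m m (act g h l T) (X, Y, Z) =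
      act g h l (tensorActionL m m m T (g⁻¹ * X * g, h⁻¹ * Y * h, l⁻¹ * Z * l)) := by
  have hG : g * (g⁻¹ * X * g) = X * g := by
    rw [← mul_assoc, ← mul_assoc, Matrix.mul_nonsing_inv g hg, one_mul]
  have hH : h * (h⁻¹ * Y * h) = Y * h := by
    rw [← mul_assoc, ← mul_assoc, Matrix.mul_nonsing_inv h hh, one_mul]
  have hL : l * (l⁻¹ * Z * l) = Z * l := by
    rw [← mul_assoc, ← mul_assoc, Matrix.mul_nonsing_inv l hl, one_mul]
  rw [tensorActionL_apply, tensorActionL_apply, act_add, act_add]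
  simp only [act_eq]
  simp only [← actA_actB, ← actA_actC, ← actB_actC, actA_actA, actB_actB, actC_actC]
  rw [hG, hH, hL]

noncomputable def actEquiv (g h l : Mat m) (hg : IsUnit g.det) (hh : IsUnit h.det)
    (hl : IsUnit l.det) : Ten m ≃ₗ[ℂ] Ten m :=
  LinearEquiv.ofLinear (actL g h l) (actL g⁻¹ h⁻¹ l⁻¹)
    (by
      apply LinearMap.ext; intro T
      show act g h l (act g⁻¹ h⁻¹ l⁻¹ T) = T
      rw [act_act, Matrix.mul_nonsing_inv g hg, Matrix.mul_nonsing_inv h hh,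
        Matrix.mul_nonsing_inv l hl, act_one])
    (by
      apply LinearMap.ext; intro T
      show act g⁻¹ h⁻¹ l⁻¹ (act g h l T) = T
      rw [act_act, Matrix.nonsing_inv_mul g hg, Matrix.nonsing_inv_mul h hh,
        Matrix.nonsing_inv_mul l hl, act_one])

noncomputable def conjT (a a' b b' c c' : Mat m) :
    (Mat m × Mat m × Mat m) →ₗ[ℂ] (Mat m × Mat m × Mat m) where
  toFun p := (a * p.1 * a', b * p.2.1 * b', c * p.2.2 * c')
  map_add' p q := by
    simp [Prod.ext_iff, mul_add, add_mul]
  map_smul' t p := by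
    simp [Prod.ext_iff, Matrix.mul_smul, Matrix.smul_mul]

noncomputable def conjEquiv (g h l : Mat m) (hg : IsUnit g.det) (hh : IsUnit h.det)
    (hl : IsUnit l.det) : (Mat m × Mat m × Mat m) ≃ₗ[ℂ] (Mat m × Mat m × Mat m) :=
  LinearEquiv.ofLinear (conjT g⁻¹ g h⁻¹ h l⁻¹ l) (conjT g g⁻¹ h h⁻¹ l l⁻¹)
    (by
      apply LinearMap.ext; intro p
      have e1 : ∀ (a : Mat m), IsUnit a.det → ∀ X, a⁻¹ * (a * X * a⁻¹) * a = X := by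
        intro a ha X
        rw [← mul_assoc, ← mul_assoc, Matrix.nonsing_inv_mul a ha, one_mul, mul_assoc,
          Matrix.nonsing_inv_mul a ha, mul_one]
      simp [conjT, Prod.ext_iff, e1 g hg, e1 h hh, e1 l hl])
    (by
      apply LinearMap.ext; intro p
      have e1 : ∀ (a : Mat m), IsUnit a.det → ∀ X, a * (a⁻¹ * X * a) * a⁻¹ = X := by
        intro a ha X
        rw [← mul_assoc, ← mul_assoc, Matrix.mul_nonsing_inv a ha, one_mul, mul_assoc,
          Matrix.mul_nonsing_inv a ha, mul_one]
      simp [conjT, Prod.ext_iff, e1 g hg, e1 h hh, e1 l hl])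

lemma finrank_ker_act (g h l : Mat m) (hg : IsUnit g.det) (hh : IsUnit h.det)
    (hl : IsUnit l.det) (T : Ten m) :
    Module.finrank ℂ (LinearMap.ker (tensorActionL m m m (act g h l T))) =
      Module.finrank ℂ (LinearMap.ker (tensorActionL m m m T)) := by
  have hcomp : tensorActionL m m m (act g h l T) =
      (actEquiv g h l hg hh hl).toLinearMap.comp
        ((tensorActionL m m m T).comp (conjEquiv g h l hg hh hl).toLinearMap) := by
    apply LinearMap.ext; intro p
    obtain ⟨X, Y, Z⟩ := p
    exact key g h l hg hh hl T X Y Z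
  rw [hcomp, LinearEquiv.ker_comp, LinearMap.ker_comp]
  rw [Submodule.comap_equiv_eq_map_symm]
  exact LinearEquiv.finrank_map_eq _ _

open scoped Matrix

variable {m : ℕ}

noncomputable def slice (T : Ten m) (i : Fin m) : Mat m := Matrix.of (T i)

noncomputable def Bm (α : Fin m → ℂ) (T : Ten m) : Mat m →ₗ[ℂ] Mat m where
  toFun U := ∑ i', (∑ i, α i * U i i') • slice T i'
  map_add' U V := by
    simp only [Matrix.add_apply, mul_add, Finset.sum_add_distrib, add_smul]
  map_smul' t U := by
    simp only [Matrix.smul_apply, smul_eq_mul, RingHom.id_apply, Finset.smul_sum]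
    refine Finset.sum_congr rfl fun i' _ => ?_
    rw [smul_smul]
    congr 1
    rw [Finset.mul_sum]
    exact Finset.sum_congr rfl fun i _ => by ring

noncomputable def Lm (α : Fin m → ℂ) (T : Ten m) :
    (Mat m × Mat m) →ₗ[ℂ] (Fin m → Mat m) where
  toFun p := fun i => (∑ i', p.1 i i' • slice T i') + p.2 * slice T i
      - slice T i * p.2 - slice T i * Bm α T p.1
  map_add' p q := by
    funext i
    simp only [Prod.fst_add, Prod.snd_add, Matrix.add_apply, add_smul,
      Finset.sum_add_distrib, Pi.add_apply, add_mul, mul_add, map_add]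
    abel
  map_smul' t p := by
    funext i
    simp only [Prod.smul_fst, Prod.smul_snd, RingHom.id_apply, Pi.smul_apply, map_smul,
      Matrix.smul_apply, smul_eq_mul, Matrix.smul_mul, Matrix.mul_smul, ← smul_smul]
    rw [← Finset.smul_sum]
    simp only [smul_add, smul_sub]

lemma entry_eq (T : Ten m) (U Y Z : Mat m) (i : Fin m) (j k : Fin m) :
    tensorActionL m m m T (U, Y, Z) i j k =
      ((∑ i', U i i' • slice T i') + Y * slice T i + slice T i * Zᵀ) j k := by
  show (∑ i', U i i' * T i' j k) + (∑ j', Y j j' * T i j' k) + (∑ k', Z k k' * T i j k') = _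
  simp only [Matrix.add_apply, Matrix.sum_apply, Matrix.smul_apply, Matrix.mul_apply,
    Matrix.transpose_apply, smul_eq_mul]
  congr 1
  exact Finset.sum_congr rfl fun k' _ => by simp only [slice, Matrix.of_apply]; ring

lemma slices_sum (α : Fin m → ℂ) (T : Ten m) (U Y Z : Mat m)
    (h : ∀ i, (∑ i', U i i' • slice T i') + Y * slice T i + slice T i * Zᵀ = 0)
    (hn : ∑ i, α i • slice T i = 1) :
    Zᵀ = -Y - Bm α T U := by
  have h0 : ∑ i, α i • ((∑ i', U i i' • slice T i') + Y * slice T i + slice T i * Zᵀ)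
      = (0 : Mat m) := by
    simp only [h, smul_zero, Finset.sum_const_zero]
  have h1 : ∑ i, α i • (∑ i', U i i' • slice T i') = Bm α T U := by
    show _ = ∑ i', (∑ i, α i * U i i') • slice T i'
    simp only [Finset.smul_sum, smul_smul]
    rw [Finset.sum_comm]
    exact Finset.sum_congr rfl fun i' _ => by rw [Finset.sum_smul]
  have h2 : ∑ i, α i • (Y * slice T i) = Y := by
    calc ∑ i, α i • (Y * slice T i) = ∑ i, Y * (α i • slice T i) := by
          simp [Matrix.mul_smul]
      _ = Y * ∑ i, α i • slice T i := by rw [Finset.mul_sum]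
      _ = Y := by rw [hn, mul_one]
  have h3 : ∑ i, α i • (slice T i * Zᵀ) = Zᵀ := by
    calc ∑ i, α i • (slice T i * Zᵀ) = ∑ i, (α i • slice T i) * Zᵀ := by
          simp [Matrix.smul_mul]
      _ = (∑ i, α i • slice T i) * Zᵀ := by rw [Finset.sum_mul]
      _ = Zᵀ := by rw [hn, one_mul]
  simp only [smul_add, Finset.sum_add_distrib, h1, h2, h3] at h0
  have hz := eq_neg_of_add_eq_zero_right h0
  rw [hz]
  abel

lemma kerF_iff (α : Fin m → ℂ) (T : Ten m) (hn : ∑ i, α i • slice T i = 1)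
    (U Y Z : Mat m) :
    tensorActionL m m m T (U, Y, Z) = 0 ↔
      (Lm α T (U, Y) = 0 ∧ Z = (-Y - Bm α T U)ᵀ) := by
  have hF : tensorActionL m m m T (U, Y, Z) = 0 ↔
      ∀ i, (∑ i', U i i' • slice T i') + Y * slice T i + slice T i * Zᵀ = 0 := by
    constructor
    · intro h i
      ext j k
      rw [← entry_eq T U Y Z i j k]
      exact congrFun (congrFun (congrFun h i) j) k
    · intro h
      funext i j k
      rw [entry_eq T U Y Z i j k, h i]
      rfl
  have hL : ∀ i, Lm α T (U, Y) i
      = (∑ i', U i i' • slice T i') + Y * slice T i - slice T i * Y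
        - slice T i * Bm α T U := fun i => rfl
  constructor
  · intro h
    have heqs := hF.mp h
    have hZ := slices_sum α T U Y Z heqs hn
    constructor
    · funext i
      have h5 := heqs i
      have hx : slice T i * (-Y - Bm α T U)
          = -(slice T i * Y) - slice T i * Bm α T U := by rw [mul_sub, mul_neg]
      rw [hZ, hx] at h5
      rw [hL i, Pi.zero_apply]
      have habel : (∑ i', U i i' • slice T i') + Y * slice T i - slice T i * Y
            - slice T i * Bm α T U
          = (∑ i', U i i' • slice T i') + Y * slice T i
            + (-(slice T i * Y) - slice T i * Bm α T U) := by abel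
      rw [habel]
      exact h5
    · rw [← hZ, Matrix.transpose_transpose]
  · rintro ⟨hL0, hZ⟩
    apply hF.mpr
    intro i
    have h5 := congrFun hL0 i
    rw [hL i, Pi.zero_apply] at h5
    rw [hZ, Matrix.transpose_transpose]
    have hx : slice T i * (-Y - Bm α T U)
        = -(slice T i * Y) - slice T i * Bm α T U := by rw [mul_sub, mul_neg]
    rw [hx]
    have habel : (∑ i', U i i' • slice T i') + Y * slice T i
          + (-(slice T i * Y) - slice T i * Bm α T U)
        = (∑ i', U i i' • slice T i') + Y * slice T i - slice T i * Y
          - slice T i * Bm α T U := by abel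
    rw [habel]
    exact h5

noncomputable def phiMap (α : Fin m → ℂ) (T : Ten m) :
    (Mat m × Mat m) →ₗ[ℂ] (Mat m × Mat m × Mat m) where
  toFun p := (p.1, p.2, (-p.2 - Bm α T p.1)ᵀ)
  map_add' p q := by
    simp only [Prod.fst_add, Prod.snd_add, map_add, Prod.mk_add_mk, Prod.ext_iff]
    refine ⟨trivial, trivial, ?_⟩
    rw [← Matrix.transpose_add]
    congr 1
    abel
  map_smul' t p := by
    simp only [Prod.smul_fst, Prod.smul_snd, map_smul, RingHom.id_apply, Prod.smul_mk,
      Prod.ext_iff]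
    refine ⟨trivial, trivial, ?_⟩
    rw [← Matrix.transpose_smul]
    congr 1
    rw [smul_sub, smul_neg]

lemma finrank_kerF (α : Fin m → ℂ) (T : Ten m) (hn : ∑ i, α i • slice T i = 1) :
    Module.finrank ℂ (LinearMap.ker (tensorActionL m m m T)) =
      Module.finrank ℂ (LinearMap.ker (Lm α T)) := by
  have hmem : ∀ p ∈ LinearMap.ker (Lm α T),
      phiMap α T p ∈ LinearMap.ker (tensorActionL m m m T) := by
    rintro ⟨U, Y⟩ hp
    rw [LinearMap.mem_ker] at hp ⊢
    exact (kerF_iff α T hn U Y _).mpr ⟨hp, rfl⟩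
  have hbij : Function.Bijective ((phiMap α T).restrict hmem) := by
    constructor
    · rintro ⟨⟨U, Y⟩, h1⟩ ⟨⟨U', Y'⟩, h2⟩ hUV
      have h3 := congrArg Subtype.val hUV
      simp only [LinearMap.restrict_apply] at h3
      have e1 : U = U' := congrArg Prod.fst h3
      have e2 : Y = Y' := congrArg Prod.fst (congrArg Prod.snd h3)
      exact Subtype.ext (Prod.ext e1 e2)
    · rintro ⟨⟨U, Y, Z⟩, hk⟩
      rw [LinearMap.mem_ker] at hk
      obtain ⟨hL0, hZ⟩ := (kerF_iff α T hn U Y Z).mp hk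
      refine ⟨⟨(U, Y), LinearMap.mem_ker.mpr hL0⟩, ?_⟩
      apply Subtype.ext
      simp only [LinearMap.restrict_apply]
      exact Prod.ext rfl (Prod.ext rfl hZ.symm)
  exact (LinearEquiv.finrank_eq (LinearEquiv.ofBijective _ hbij)).symm

noncomputable def dotL (α : Fin m → ℂ) : (Fin m → ℂ) →ₗ[ℂ] ℂ where
  toFun v := ∑ i, α i * v i
  map_add' u v := by simp [mul_add, Finset.sum_add_distrib]
  map_smul' t v := by simp [Finset.mul_sum]; exact Finset.sum_congr rfl fun i _ => by ring

noncomputable def iota (α : Fin m → ℂ) : (Fin m → ℂ) →ₗ[ℂ] (Mat m × Mat m) where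
  toFun v := (Matrix.of fun i i' => v i * α i', 0)
  map_add' u v := by
    simp only [Prod.mk_add_mk, Prod.ext_iff, add_zero]
    refine ⟨?_, trivial⟩
    ext i i'
    simp [add_mul]
  map_smul' t v := by
    simp only [RingHom.id_apply, Prod.smul_mk, Prod.ext_iff, smul_zero]
    refine ⟨?_, trivial⟩
    ext i i'
    simp [mul_assoc]

noncomputable def Jmap (α : Fin m → ℂ) (T : Ten m) :
    LinearMap.ker (dotL (m := m) α) →ₗ[ℂ] (Fin m → Mat m) :=
  (Lm α T).comp ((iota α).comp (LinearMap.ker (dotL α)).subtype)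

lemma Jmap_apply (α : Fin m → ℂ) (T : Ten m) (hn : ∑ i, α i • slice T i = 1)
    (v : LinearMap.ker (dotL (m := m) α)) :
    Jmap α T v = fun i => v.1 i • (1 : Mat m) := by
  have hv : ∑ i, α i * v.1 i = 0 := v.2
  funext i
  show (∑ i', (v.1 i * α i') • slice T i') + 0 * slice T i - slice T i * 0
      - slice T i * Bm α T (Matrix.of fun p q => v.1 p * α q) = v.1 i • 1
  have hB : Bm α T (Matrix.of fun p q => v.1 p * α q) = 0 := by
    show ∑ i', (∑ q, α q * (v.1 q * α i')) • slice T i' = 0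
    have : ∀ i' : Fin m, (∑ q, α q * (v.1 q * α i')) = 0 := by
      intro i'
      have : ∑ q, α q * (v.1 q * α i') = (∑ q, α q * v.1 q) * α i' := by
        rw [Finset.sum_mul]
        exact Finset.sum_congr rfl fun q _ => by ring
      rw [this, hv, zero_mul]
    simp [this]
  simp only [hB, zero_mul, mul_zero, sub_zero, add_zero]
  have : ∀ i' : Fin m, (v.1 i * α i') • slice T i' = v.1 i • (α i' • slice T i') := by
    intro i'; rw [smul_smul]
  rw [Finset.sum_congr rfl fun i' _ => this i', ← Finset.smul_sum, hn]

lemma finrank_Mat : Module.finrank ℂ (Mat m) = m ^ 2 := by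
  rw [Module.finrank_matrix]
  simp [pow_two]

lemma alpha_ne (hm : 1 ≤ m) {α : Fin m → ℂ} {T : Ten m}
    (hn : ∑ i, α i • slice T i = 1) : ∃ i, α i ≠ 0 := by
  by_contra h
  push_neg at h
  have : (∑ i, α i • slice T i) = 0 := by simp [h]
  rw [hn] at this
  have := congrFun (congrFun this ⟨0, hm⟩) ⟨0, hm⟩
  simp [Matrix.one_apply] at this

lemma finrank_ker_dot {α : Fin m → ℂ} (hα : ∃ i, α i ≠ 0) :
    Module.finrank ℂ (LinearMap.ker (dotL (m := m) α)) = m - 1 := by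
  obtain ⟨i0, hi0⟩ := hα
  have hsurj : Function.Surjective (dotL (m := m) α) := by
    intro x
    refine ⟨Pi.single i0 (x / α i0), ?_⟩
    show ∑ i, α i * (Pi.single i0 (x / α i0) : Fin m → ℂ) i = x
    rw [Finset.sum_eq_single i0]
    · rw [Pi.single_eq_same]
      field_simp
    · intro b _ hb
      rw [Pi.single_eq_of_ne hb, mul_zero]
    · intro hh
      exact absurd (Finset.mem_univ i0) hh
  have hrange : LinearMap.range (dotL (m := m) α) = ⊤ := LinearMap.range_eq_top.mpr hsurj
  have hrn := LinearMap.finrank_range_add_finrank_ker (dotL (m := m) α)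
  rw [hrange, finrank_top, Module.finrank_self, Module.finrank_fintype_fun_eq_card,
    Fintype.card_fin] at hrn
  omega

lemma rank_lower (hm : 1 ≤ m) {α : Fin m → ℂ} {T : Ten m}
    (hn : ∑ i, α i • slice T i = 1) :
    m - 1 ≤ Module.finrank ℂ (LinearMap.range (Lm α T)) := by
  have hJinj : Function.Injective (Jmap α T) := by
    intro v w hvw
    rw [Jmap_apply α T hn, Jmap_apply α T hn] at hvw
    apply Subtype.ext
    funext i
    have := congrFun (congrFun (congrFun hvw i) ⟨0, hm⟩) ⟨0, hm⟩
    simpa [Matrix.one_apply] using this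
  have h1 : Module.finrank ℂ (LinearMap.range (Jmap α T)) = m - 1 := by
    rw [LinearMap.finrank_range_of_inj hJinj, finrank_ker_dot (alpha_ne hm hn)]
  have h2 : LinearMap.range (Jmap α T) ≤ LinearMap.range (Lm α T) :=
    LinearMap.range_comp_le_range _ _
  calc m - 1 = Module.finrank ℂ (LinearMap.range (Jmap α T)) := h1.symm
    _ ≤ _ := Submodule.finrank_mono h2

lemma rank_nullity_Lm (α : Fin m → ℂ) (T : Ten m) :
    Module.finrank ℂ (LinearMap.range (Lm α T)) +
      Module.finrank ℂ (LinearMap.ker (Lm α T)) = 2 * m ^ 2 := by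
  have := LinearMap.finrank_range_add_finrank_ker (Lm α T)
  rwa [Module.finrank_prod, finrank_Mat, show m^2 + m^2 = 2*m^2 by ring] at this

lemma core_bound (hm : 1 ≤ m) {α : Fin m → ℂ} {T : Ten m}
    (hn : ∑ i, α i • slice T i = 1) :
    Module.finrank ℂ (LinearMap.ker (Lm α T)) ≤ 2 * m ^ 2 - m + 1 := by
  have h1 := rank_lower hm hn
  have h2 := rank_nullity_Lm α T
  have h3 : m ≤ m ^ 2 := Nat.le_self_pow (by norm_num) m
  omega

lemma mem_range_J {α : Fin m → ℂ} {T : Ten m} (hn : ∑ i, α i • slice T i = 1)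
    (S : Fin m → Mat m) :
    S ∈ LinearMap.range (Jmap α T) ↔
      ∃ w : Fin m → ℂ, (∑ i, α i * w i = 0) ∧ S = fun i => w i • 1 := by
  constructor
  · rintro ⟨v, rfl⟩
    exact ⟨v.1, v.2, Jmap_apply α T hn v⟩
  · rintro ⟨w, hw, rfl⟩
    refine ⟨⟨w, ?_⟩, ?_⟩
    · exact hw
    · exact Jmap_apply α T hn _

lemma sum_alpha_c (hm : 1 ≤ m) {α c : Fin m → ℂ} {T : Ten m}
    (hn : ∑ i, α i • slice T i = 1) (hc : ∀ i, slice T i = c i • 1) :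
    ∑ i, α i * c i = 1 := by
  have h1 : (∑ i, α i * c i) • (1 : Mat m) = 1 := by
    calc (∑ i, α i * c i) • (1 : Mat m) = ∑ i, α i • slice T i := by
          rw [Finset.sum_smul]
          exact (Finset.sum_congr rfl fun i _ => by rw [hc i, smul_smul]).symm
      _ = 1 := hn
  have := congrFun (congrFun h1 ⟨0, hm⟩) ⟨0, hm⟩
  simpa [Matrix.one_apply] using this

lemma Lm_scalar {α c : Fin m → ℂ} {T : Ten m} (hc : ∀ i, slice T i = c i • 1)
    (U Y : Mat m) (i : Fin m) :
    Lm α T (U, Y) i =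
      ((∑ i', U i i' * c i') - c i * (∑ i', (∑ q, α q * U q i') * c i')) • 1 := by
  show (∑ i', U i i' • slice T i') + Y * slice T i - slice T i * Y
      - slice T i * Bm α T U = _
  have hB : Bm α T U = (∑ i', (∑ q, α q * U q i') * c i') • (1 : Mat m) := by
    show ∑ i', (∑ q, α q * U q i') • slice T i' = _
    rw [Finset.sum_smul]
    exact Finset.sum_congr rfl fun i' _ => by rw [hc i', smul_smul]
  rw [hB]
  simp only [hc]
  have h1 : ∑ i', U i i' • (c i' • (1 : Mat m)) = (∑ i', U i i' * c i') • 1 := by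
    rw [Finset.sum_smul]
    exact Finset.sum_congr rfl fun i' _ => by rw [smul_smul]
  have h2 : Y * (c i • (1 : Mat m)) = c i • Y := by
    rw [Matrix.mul_smul, mul_one]
  have h3 : (c i • (1 : Mat m)) * Y = c i • Y := by
    rw [Matrix.smul_mul, one_mul]
  have h4 : (c i • (1 : Mat m)) * ((∑ i', (∑ q, α q * U q i') * c i') • (1 : Mat m))
      = (c i * (∑ i', (∑ q, α q * U q i') * c i')) • 1 := by
    rw [Matrix.smul_mul, Matrix.mul_smul, one_mul, smul_smul]
  rw [h1, h2, h3, h4, sub_smul]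
  abel

lemma scalar_case (hm : 1 ≤ m) {α c : Fin m → ℂ} {T : Ten m}
    (hn : ∑ i, α i • slice T i = 1) (hc : ∀ i, slice T i = c i • 1) :
    Module.finrank ℂ (LinearMap.ker (Lm α T)) = 2 * m ^ 2 - m + 1 := by
  have hac := sum_alpha_c hm hn hc
  have hle : LinearMap.range (Lm α T) ≤ LinearMap.range (Jmap α T) := by
    rintro S ⟨⟨U, Y⟩, rfl⟩
    rw [mem_range_J hn]
    refine ⟨fun i => (∑ i', U i i' * c i') - c i * (∑ i', (∑ q, α q * U q i') * c i'),
      ?_, ?_⟩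
    · have hswap : ∑ i, α i * ∑ i', U i i' * c i'
          = ∑ i', (∑ q, α q * U q i') * c i' := by
        calc ∑ i, α i * ∑ i', U i i' * c i'
            = ∑ i, ∑ i', α i * (U i i' * c i') :=
              Finset.sum_congr rfl fun i _ => Finset.mul_sum _ _ _
          _ = ∑ i', ∑ i, α i * (U i i' * c i') := Finset.sum_comm
          _ = ∑ i', (∑ q, α q * U q i') * c i' := by
              refine Finset.sum_congr rfl fun i' _ => ?_
              rw [Finset.sum_mul]
              exact Finset.sum_congr rfl fun q _ => by ring
      simp only [mul_sub, Finset.sum_sub_distrib]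
      rw [hswap]
      have hfac : ∑ i, α i * (c i * (∑ i', (∑ q, α q * U q i') * c i'))
          = (∑ i, α i * c i) * (∑ i', (∑ q, α q * U q i') * c i') := by
        rw [Finset.sum_mul]
        exact Finset.sum_congr rfl fun i _ => by ring
      rw [hfac, hac, one_mul, sub_self]
    · funext i
      exact Lm_scalar hc U Y i
  have h1 : Module.finrank ℂ (LinearMap.range (Lm α T)) ≤ m - 1 := by
    have hJinj : Function.Injective (Jmap α T) := by
      intro v w hvw
      rw [Jmap_apply α T hn, Jmap_apply α T hn] at hvw
      apply Subtype.ext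
      funext i
      have := congrFun (congrFun (congrFun hvw i) ⟨0, hm⟩) ⟨0, hm⟩
      simpa [Matrix.one_apply] using this
    calc Module.finrank ℂ (LinearMap.range (Lm α T))
        ≤ Module.finrank ℂ (LinearMap.range (Jmap α T)) := Submodule.finrank_mono hle
      _ = m - 1 := by
          rw [LinearMap.finrank_range_of_inj hJinj, finrank_ker_dot (alpha_ne hm hn)]
  have h2 := rank_lower hm hn
  have h3 := rank_nullity_Lm α T
  have h4 : m ≤ m ^ 2 := Nat.le_self_pow (by norm_num) m
  omega

lemma eq_case (hm : 1 ≤ m) {α : Fin m → ℂ} {T : Ten m}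
    (hn : ∑ i, α i • slice T i = 1)
    (heq : Module.finrank ℂ (LinearMap.ker (Lm α T)) = 2 * m ^ 2 - m + 1) :
    ∃ c : Fin m → ℂ, ∀ i, slice T i = c i • 1 := by
  -- rank is exactly m - 1
  have h2 := rank_lower hm hn
  have h3 := rank_nullity_Lm α T
  have h4 : m ≤ m ^ 2 := Nat.le_self_pow (by norm_num) m
  have hrank : Module.finrank ℂ (LinearMap.range (Lm α T)) = m - 1 := by omega
  -- range Lm = range Jmap
  have hJinj : Function.Injective (Jmap α T) := by
    intro v w hvw
    rw [Jmap_apply α T hn, Jmap_apply α T hn] at hvw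
    apply Subtype.ext
    funext i
    have := congrFun (congrFun (congrFun hvw i) ⟨0, hm⟩) ⟨0, hm⟩
    simpa [Matrix.one_apply] using this
  have hJrank : Module.finrank ℂ (LinearMap.range (Jmap α T)) = m - 1 := by
    rw [LinearMap.finrank_range_of_inj hJinj, finrank_ker_dot (alpha_ne hm hn)]
  have hWle : LinearMap.range (Jmap α T) ≤ LinearMap.range (Lm α T) :=
    LinearMap.range_comp_le_range _ _
  have hWeq : LinearMap.range (Jmap α T) = LinearMap.range (Lm α T) :=
    Submodule.eq_of_le_of_finrank_le hWle (by rw [hJrank, hrank])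
  -- commutators are zero
  have hcomm : ∀ (Y : Mat m) (i : Fin m), Y * slice T i = slice T i * Y := by
    intro Y i
    have hmem : Lm α T (0, Y) ∈ LinearMap.range (Jmap α T) := by
      rw [hWeq]; exact LinearMap.mem_range_self _ _
    rw [mem_range_J hn] at hmem
    obtain ⟨w, hw0, hw⟩ := hmem
    have hLY : ∀ i, Lm α T (0, Y) i = Y * slice T i - slice T i * Y := by
      intro i
      show (∑ i', (0 : Mat m) i i' • slice T i') + Y * slice T i - slice T i * Y
          - slice T i * Bm α T 0 = _
      rw [map_zero, mul_zero, sub_zero]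
      simp [Matrix.zero_apply]
    have hwi : w i = 0 := by
      have htr : Matrix.trace (Y * slice T i - slice T i * Y) = 0 := by
        rw [Matrix.trace_sub, Matrix.trace_mul_comm, sub_self]
      have h5 : Y * slice T i - slice T i * Y = w i • 1 := by
        rw [← hLY i, hw]
      rw [h5, Matrix.trace_smul, Matrix.trace_one] at htr
      simp only [Fintype.card_fin, smul_eq_mul] at htr
      have hmne : (m : ℂ) ≠ 0 := Nat.cast_ne_zero.mpr (by omega)
      rcases mul_eq_zero.mp htr with h | h
      · exact h
      · exact absurd h hmne
    have := hLY i
    rw [hw] at this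
    simp only [hwi, zero_smul] at this
    exact sub_eq_zero.mp this.symm
  -- each slice is scalar
  have hscal : ∀ i, ∃ ci : ℂ, slice T i = ci • 1 := by
    intro i
    have : slice T i ∈ Set.range ⇑(Matrix.scalar (Fin m)) := by
      rw [Matrix.mem_range_scalar_iff_commute_single]
      intro p q _
      exact (hcomm (Matrix.single p q 1) i)
    obtain ⟨ci, hci⟩ := this
    exact ⟨ci, by rw [← hci, Matrix.scalar_apply, Matrix.smul_one_eq_diagonal]⟩
  choose c hc using hscal
  exact ⟨c, hc⟩

lemma orbit_of_scalar (z : Fin m) {c : Fin m → ℂ} {T : Ten m}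
    (hc : ∀ i, slice T i = c i • 1) (hcz : ∃ p, c p ≠ 0) :
    ∃ g : Mat m, IsUnit g.det ∧
      T = act g 1 1 (fun i j k => if i = z ∧ j = k then (1 : ℂ) else 0) := by
  obtain ⟨p, hp⟩ := hcz
  refine ⟨((1 : Mat m).updateCol p c).submatrix id ⇑(Equiv.swap z p), ?_, ?_⟩
  · rw [Matrix.det_permute']
    have hdet : ((1 : Mat m).updateCol p c).det = c p := by
      rw [← Matrix.cramer_apply, Matrix.cramer_one]
      rfl
    rw [hdet]
    apply isUnit_iff_ne_zero.mpr
    exact mul_ne_zero (Int.cast_ne_zero.mpr (Units.ne_zero _)) hp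
  · funext i j k
    have hT : T i j k = c i * (if j = k then 1 else 0) := by
      have := congrFun (congrFun (hc i) j) k
      simpa [slice, Matrix.one_apply] using this
    have hgz : ((1 : Mat m).updateCol p c).submatrix id ⇑(Equiv.swap z p) i z = c i := by
      simp [Matrix.submatrix_apply, Equiv.swap_apply_left, Matrix.updateCol_apply]
    show T i j k = ∑ i', ∑ j', ∑ k',
      ((1 : Mat m).updateCol p c).submatrix id ⇑(Equiv.swap z p) i i' *
        (1 : Mat m) j j' * (1 : Mat m) k k' * (if i' = z ∧ j' = k' then (1:ℂ) else 0)
    rw [hT]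
    by_cases hjk : j = k <;>
      simp [Matrix.one_apply, ite_and, hjk, Finset.sum_ite_eq, hgz, mul_ite]

lemma normalize {T : Ten m} (hgen : OneAGeneric m T) :
    ∃ (α : Fin m → ℂ) (l : Mat m), IsUnit l.det ∧
      ∑ i, α i • slice (act 1 1 l T) i = 1 := by
  obtain ⟨α, hα⟩ := hgen
  set M := contractA m m m T α with hM
  have hMt : IsUnit (Mᵀ).det := by rw [Matrix.det_transpose]; exact hα
  refine ⟨α, (Mᵀ)⁻¹, Matrix.isUnit_nonsing_inv_det _ hMt, ?_⟩
  have hinv : (Mᵀ)⁻¹ * Mᵀ = 1 := Matrix.nonsing_inv_mul _ hMt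
  ext j k
  have hact : ∀ i, act 1 1 ((Mᵀ)⁻¹) T i j k = ∑ k', (Mᵀ)⁻¹ k k' * T i j k' := by
    intro i
    rw [show act 1 1 ((Mᵀ)⁻¹) T = actC ((Mᵀ)⁻¹) T by rw [act_eq, actA_one, actB_one]]
    rfl
  have hLHS : (∑ i, α i • slice (act 1 1 ((Mᵀ)⁻¹) T) i) j k
      = ∑ i, α i * ∑ k', (Mᵀ)⁻¹ k k' * T i j k' := by
    rw [Matrix.sum_apply]
    refine Finset.sum_congr rfl fun i _ => ?_
    rw [Matrix.smul_apply, smul_eq_mul]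
    show α i * act 1 1 ((Mᵀ)⁻¹) T i j k = _
    rw [hact i]
  rw [hLHS]
  calc ∑ i, α i * ∑ k', (Mᵀ)⁻¹ k k' * T i j k'
      = ∑ i, ∑ k', α i * ((Mᵀ)⁻¹ k k' * T i j k') :=
        Finset.sum_congr rfl fun i _ => Finset.mul_sum _ _ _
    _ = ∑ k', ∑ i, α i * ((Mᵀ)⁻¹ k k' * T i j k') := Finset.sum_comm
    _ = ∑ k', (Mᵀ)⁻¹ k k' * Mᵀ k' j := by
        refine Finset.sum_congr rfl fun k' _ => ?_
        rw [Matrix.transpose_apply, hM]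
        show ∑ i, α i * ((Mᵀ)⁻¹ k k' * T i j k') = (Mᵀ)⁻¹ k k' * ∑ i, α i * T i j k'
        rw [Finset.mul_sum]
        exact Finset.sum_congr rfl fun i _ => by ring
    _ = ((Mᵀ)⁻¹ * Mᵀ) k j := (Matrix.mul_apply).symm
    _ = (1 : Mat m) j k := by rw [hinv, Matrix.one_apply, Matrix.one_apply]; simp [eq_comm]

lemma T0_slice (z : Fin m) (i : Fin m) :
    slice (fun i j k => if i = z ∧ j = k then (1 : ℂ) else 0) i
      = (if i = z then (1 : ℂ) else 0) • 1 := by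
  ext j k
  by_cases h1 : i = z <;> by_cases h2 : j = k <;>
    simp [slice, Matrix.one_apply, h1, h2]

lemma T0_norm (z : Fin m) :
    ∑ i, (if i = z then (1 : ℂ) else 0) •
      slice (fun i j k => if i = z ∧ j = k then (1 : ℂ) else 0) i = 1 := by
  rw [Finset.sum_eq_single z]
  · rw [T0_slice]
    simp
  · intro b _ hb
    simp [hb]
  · intro h
    exact absurd (Finset.mem_univ z) h

end OneAG
open OneAG in
/-- A `1_A`-generic tensor `T ∈ ℂ^m ⊗ ℂ^m ⊗ ℂ^m` satisfies
`dim G_T ≤ 2m² − m − 1` (i.e. `dim g̃_T ≤ 2m² − m + 1`), with equality iff `T` is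
isomorphic to `T₀ = a₁ ⊗ (Σ_j b_j ⊗ c_j)`. -/
theorem oneAGeneric_max_symmetry (m : ℕ) (hm : 1 ≤ m)
    (T : Fin m → Fin m → Fin m → ℂ) (hgen : OneAGeneric m T) :
    Module.finrank ℂ (LinearMap.ker (tensorActionL m m m T)) ≤ 2 * m ^ 2 - m + 1 ∧
    (Module.finrank ℂ (LinearMap.ker (tensorActionL m m m T)) = 2 * m ^ 2 - m + 1 ↔
      T ∈ glOrbit m m m (fun i j k => if i = ⟨0, hm⟩ ∧ j = k then 1 else 0)) := by
  classical
  obtain ⟨α, l, hl, hn'⟩ := normalize (m := m) hgen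
  have h1one : IsUnit (1 : Mat m).det := by rw [Matrix.det_one]; exact isUnit_one
  have hkerT : Module.finrank ℂ (LinearMap.ker (tensorActionL m m m T))
      = Module.finrank ℂ (LinearMap.ker (Lm α (act 1 1 l T))) := by
    rw [← finrank_ker_act 1 1 l h1one h1one hl T]
    exact finrank_kerF α (act 1 1 l T) hn'
  have hT0ker : Module.finrank ℂ (LinearMap.ker (tensorActionL m m m
      (fun i j k => if i = (⟨0, hm⟩ : Fin m) ∧ j = k then (1 : ℂ) else 0)))
      = 2 * m ^ 2 - m + 1 := by
    rw [finrank_kerF (fun i => if i = (⟨0, hm⟩ : Fin m) then (1 : ℂ) else 0) _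
      (T0_norm ⟨0, hm⟩)]
    exact scalar_case hm (T0_norm ⟨0, hm⟩) (T0_slice ⟨0, hm⟩)
  refine ⟨?_, ?_, ?_⟩
  · rw [hkerT]; exact core_bound hm hn'
  · intro heq
    have heq' : Module.finrank ℂ (LinearMap.ker (Lm α (act 1 1 l T)))
        = 2 * m ^ 2 - m + 1 := by rw [← hkerT]; exact heq
    obtain ⟨c, hc⟩ := eq_case hm hn' heq'
    have hcz : ∃ p, c p ≠ 0 := by
      by_contra hcc
      push_neg at hcc
      have h1 := sum_alpha_c hm hn' hc
      simp [hcc] at h1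
    obtain ⟨g, hg, hTg⟩ := orbit_of_scalar ⟨0, hm⟩ hc hcz
    have hlinv : IsUnit (l⁻¹).det := Matrix.isUnit_nonsing_inv_det _ hl
    refine ⟨g, 1, l⁻¹, hg, h1one, hlinv, ?_⟩
    show T = act g 1 l⁻¹ (fun i j k => if i = (⟨0, hm⟩ : Fin m) ∧ j = k then (1 : ℂ) else 0)
    have hback : T = act 1 1 l⁻¹ (act 1 1 l T) := by
      rw [act_act, one_mul, Matrix.nonsing_inv_mul l hl, act_one]
    calc T = act 1 1 l⁻¹ (act 1 1 l T) := hback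
      _ = act 1 1 l⁻¹ (act g 1 1
            (fun i j k => if i = (⟨0, hm⟩ : Fin m) ∧ j = k then (1 : ℂ) else 0)) := by
          rw [hTg]
      _ = act g 1 l⁻¹ (fun i j k => if i = (⟨0, hm⟩ : Fin m) ∧ j = k then (1 : ℂ) else 0) := by
          rw [act_act, one_mul, one_mul, mul_one]
  · rintro ⟨g, h, l₂, hg, hh, hl₂, hS⟩
    have hTeq : T = act g h l₂
        (fun i j k => if i = (⟨0, hm⟩ : Fin m) ∧ j = k then (1 : ℂ) else 0) := hS
    rw [hTeq, finrank_ker_act g h l₂ hg hh hl₂]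
    exact hT0ker
end

section
/- For T₀ = a₁ ⊗ (Σ_{j=1}^m b_j ⊗ c_j) ∈ ℂ^m ⊗ ℂ^m ⊗ ℂ^m, the annihilator g̃_{T₀} in gl_m ⊕ gl_m ⊕ gl_m consists of triples (U, μ·Id + V, ν·Id − Vᵗ) where μ, ν ∈ ℂ, V ∈ gl_m, and U has first row (−(μ+ν), u) for arbitrary u ∈ ℂ^{m−1}, first column (below the diagonal entry) zero, and arbitrary lower-right (m−1)×(m−1) block; consequently dim g̃_{T₀} = 2m² − m + 1. -/
open scoped BigOperators
open Matrix

set_option linter.unnecessarySeqFocus false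

lemma mem_ker_iff (m : ℕ) (hm : 1 ≤ m)
    (p : Matrix (Fin m) (Fin m) ℂ × Matrix (Fin m) (Fin m) ℂ × Matrix (Fin m) (Fin m) ℂ) :
    p ∈ LinearMap.ker (tensorActionL m m m
        (fun i j k => if i = ⟨0, hm⟩ ∧ j = k then 1 else 0)) ↔
      ((∀ i, i ≠ (⟨0, hm⟩ : Fin m) → p.1 i ⟨0, hm⟩ = 0) ∧
       (∀ j k : Fin m, j ≠ k → p.2.1 j k + p.2.2 k j = 0) ∧
       (∀ j : Fin m, p.1 ⟨0, hm⟩ ⟨0, hm⟩ + p.2.1 j j + p.2.2 j j = 0)) := by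
  have key : ∀ i j k : Fin m,
      (tensorActionL m m m (fun i j k => if i = ⟨0, hm⟩ ∧ j = k then 1 else 0)) p i j k =
      (if j = k then p.1 i ⟨0, hm⟩ else 0) + (if i = (⟨0, hm⟩ : Fin m) then p.2.1 j k else 0) +
        (if i = (⟨0, hm⟩ : Fin m) then p.2.2 k j else 0) := by
    intro i j k
    show (∑ i', p.1 i i' * _) + (∑ j', p.2.1 j j' * _) + (∑ k', p.2.2 k k' * _) = _
    simp only [ite_and, mul_ite, mul_one, mul_zero]
    by_cases hi : i = (⟨0, hm⟩ : Fin m) <;>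
      simp [hi, Finset.sum_ite_eq', Finset.sum_ite_eq]
  rw [LinearMap.mem_ker]
  constructor
  · intro h
    have h' : ∀ i j k : Fin m,
        (if j = k then p.1 i ⟨0, hm⟩ else 0) + (if i = (⟨0, hm⟩ : Fin m) then p.2.1 j k else 0) +
        (if i = (⟨0, hm⟩ : Fin m) then p.2.2 k j else 0) = 0 := by
      intro i j k; rw [← key]; rw [h]; rfl
    refine ⟨fun i hi => ?_, fun j k hjk => ?_, fun j => ?_⟩
    · have := h' i ⟨0, hm⟩ ⟨0, hm⟩; simpa [hi] using this
    · have := h' ⟨0, hm⟩ j k; simpa [hjk] using this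
    · have := h' ⟨0, hm⟩ j j; simpa [add_assoc] using this
  · rintro ⟨h1, h2, h3⟩
    funext i j k
    show (tensorActionL m m m fun i j k => if i = ⟨0, hm⟩ ∧ j = k then 1 else 0) p i j k = (0:ℂ)
    rw [key]
    by_cases hi : i = (⟨0, hm⟩ : Fin m)
    · subst hi
      by_cases hjk : j = k
      · subst hjk; simp only [if_pos rfl, eq_self_iff_true, if_true]; linear_combination h3 j
      · simp only [if_neg hjk, if_pos rfl, eq_self_iff_true, if_true, zero_add]; linear_combination h2 j k hjk
    · by_cases hjk : j = k
      · simp [hi, hjk, h1 i hi]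
      · simp [hi, hjk]
-- assume mem_ker_iff proved (in a.lean); test char lemma standalone
lemma char (m : ℕ) (hm : 1 ≤ m)
    (p : Matrix (Fin m) (Fin m) ℂ × Matrix (Fin m) (Fin m) ℂ × Matrix (Fin m) (Fin m) ℂ) :
    ((∀ i, i ≠ (⟨0, hm⟩ : Fin m) → p.1 i ⟨0, hm⟩ = 0) ∧
     (∀ j k : Fin m, j ≠ k → p.2.1 j k + p.2.2 k j = 0) ∧
     (∀ j : Fin m, p.1 ⟨0, hm⟩ ⟨0, hm⟩ + p.2.1 j j + p.2.2 j j = 0)) ↔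
      ∃ (mu nu : ℂ) (V : Matrix (Fin m) (Fin m) ℂ),
          p.2.1 = mu • (1 : Matrix (Fin m) (Fin m) ℂ) + V ∧
          p.2.2 = nu • (1 : Matrix (Fin m) (Fin m) ℂ) - Vᵀ ∧
          p.1 ⟨0, hm⟩ ⟨0, hm⟩ = -(mu + nu) ∧
          (∀ i : Fin m, i ≠ ⟨0, hm⟩ → p.1 i ⟨0, hm⟩ = 0) := by
  constructor
  · rintro ⟨h1, h2, h3⟩
    refine ⟨p.2.1 ⟨0, hm⟩ ⟨0, hm⟩, p.2.2 ⟨0, hm⟩ ⟨0, hm⟩,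
      p.2.1 - p.2.1 ⟨0, hm⟩ ⟨0, hm⟩ • (1 : Matrix (Fin m) (Fin m) ℂ), ?_, ?_, ?_, h1⟩
    · abel
    · funext j k
      simp only [Matrix.sub_apply, Matrix.smul_apply, Matrix.transpose_apply,
        Matrix.one_apply, smul_eq_mul]
      by_cases hjk : j = k
      · subst hjk
        simp only [if_pos rfl, eq_self_iff_true, if_true, mul_one]
        linear_combination h3 j - h3 ⟨0, hm⟩
      · have hkj : k ≠ j := fun h => hjk h.symm
        simp only [if_neg hjk, if_neg hkj, mul_zero]
        linear_combination h2 k j hkj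
    · linear_combination h3 ⟨0, hm⟩
  · rintro ⟨mu, nu, V, hB, hC, hA, h0⟩
    refine ⟨h0, fun j k hjk => ?_, fun j => ?_⟩
    · rw [hB, hC]
      simp only [Matrix.add_apply, Matrix.sub_apply, Matrix.smul_apply,
        Matrix.transpose_apply, Matrix.one_apply, smul_eq_mul]
      have hkj : k ≠ j := fun h => hjk h.symm
      simp only [if_neg hjk, if_neg hkj, mul_zero]
      ring
    · rw [hB, hC, hA]
      simp only [Matrix.add_apply, Matrix.sub_apply, Matrix.smul_apply,
        Matrix.transpose_apply, Matrix.one_apply, smul_eq_mul, if_pos rfl, eq_self_iff_true, if_true, mul_one]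
      ring

noncomputable def gmap (m : ℕ) (hm : 1 ≤ m) :
    (Matrix (Fin m) (Fin m) ℂ × ℂ × (Fin m → {j : Fin m // j ≠ ⟨0, hm⟩} → ℂ)) →ₗ[ℂ]
      (Matrix (Fin m) (Fin m) ℂ × Matrix (Fin m) (Fin m) ℂ × Matrix (Fin m) (Fin m) ℂ) where
  toFun q :=
    ( fun i j => if h : j = (⟨0, hm⟩ : Fin m) then
        (if i = (⟨0, hm⟩ : Fin m) then -(q.1 ⟨0, hm⟩ ⟨0, hm⟩ + q.2.1) else 0)
      else q.2.2 i ⟨j, h⟩,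
      q.1,
      fun j k => if j = k then q.1 ⟨0, hm⟩ ⟨0, hm⟩ + q.2.1 - q.1 j j else -(q.1 k j) )
  map_add' x y := by
    refine Prod.ext ?_ (Prod.ext rfl ?_)
    · funext i j
      show _ = (_ : Matrix (Fin m) (Fin m) ℂ) i j + (_ : Matrix (Fin m) (Fin m) ℂ) i j
      by_cases hj : j = (⟨0, hm⟩ : Fin m) <;> by_cases hi : i = (⟨0, hm⟩ : Fin m) <;>
        simp [hj, hi] <;> ring
    · funext j k
      show _ = (_ : Matrix (Fin m) (Fin m) ℂ) j k + (_ : Matrix (Fin m) (Fin m) ℂ) j k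
      by_cases hjk : j = k <;> simp [hjk] <;> ring
  map_smul' t x := by
    refine Prod.ext ?_ (Prod.ext rfl ?_)
    · funext i j
      show _ = t • (_ : Matrix (Fin m) (Fin m) ℂ) i j
      by_cases hj : j = (⟨0, hm⟩ : Fin m) <;> by_cases hi : i = (⟨0, hm⟩ : Fin m) <;>
        simp [hj, hi] <;> ring
    · funext j k
      show _ = t • (_ : Matrix (Fin m) (Fin m) ℂ) j k
      by_cases hjk : j = k <;> simp [hjk] <;> ring

lemma gmap_inj (m : ℕ) (hm : 1 ≤ m) : Function.Injective (gmap m hm) := by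
  rw [← LinearMap.ker_eq_bot, LinearMap.ker_eq_bot']
  intro q hq
  have hB : q.1 = 0 := congrArg (fun r => r.2.1) hq
  have hc : q.2.1 = 0 := by
    have h := congrFun (congrFun (congrArg (fun r => r.2.2) hq) (⟨0, hm⟩ : Fin m)) (⟨0, hm⟩ : Fin m)
    simp only [gmap, LinearMap.coe_mk, AddHom.coe_mk, if_pos rfl] at h
    rw [hB] at h
    simpa using h
  have hA : q.2.2 = 0 := by
    funext i j
    have h := congrFun (congrFun (congrArg Prod.fst hq) i) j.1
    simp only [gmap, LinearMap.coe_mk, AddHom.coe_mk] at h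
    rw [dif_neg j.2] at h
    simpa [Subtype.eta] using h
  exact Prod.ext hB (Prod.ext hc hA)

lemma rank_eq (m : ℕ) (hm : 1 ≤ m) :
    Module.finrank ℂ
      (Matrix (Fin m) (Fin m) ℂ × ℂ × (Fin m → {j : Fin m // j ≠ (⟨0, hm⟩ : Fin m)} → ℂ))
      = 2 * m ^ 2 - m + 1 := by
  obtain ⟨n, rfl⟩ : ∃ n, m = n + 1 := ⟨m - 1, by omega⟩
  have hcard : Fintype.card {j : Fin (n+1) // j ≠ (⟨0, hm⟩ : Fin (n+1))} = n := by
    have h := Fintype.card_subtype_compl (fun j : Fin (n+1) => j = ⟨0, hm⟩)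
    rw [Fintype.card_subtype_eq, Fintype.card_fin] at h
    simpa using h
  rw [Module.finrank_prod, Module.finrank_prod, Module.finrank_matrix]
  rw [Module.finrank_self]
  rw [Module.finrank_pi_fintype]
  simp only [Module.finrank_pi, hcard, Fintype.card_fin, Finset.sum_const, smul_eq_mul,
    Finset.card_univ]
  have h2 : (n + 1) ≤ 2 * (n + 1) ^ 2 := by nlinarith
  zify [h2]; ring

/-- For `T₀ = a₁ ⊗ (Σ_j b_j ⊗ c_j)`, the annihilator `g̃_{T₀}` consists of the
triples `(U, μ·Id + V, ν·Id − Vᵗ)` with `V` arbitrary, `U` having first entry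
`−(μ+ν)` and zero first column below it (first row and lower-right block
arbitrary); consequently `dim g̃_{T₀} = 2m² − m + 1`. -/
theorem annihilator_of_T0 (m : ℕ) (hm : 1 ≤ m) :
    (∀ p : Matrix (Fin m) (Fin m) ℂ × Matrix (Fin m) (Fin m) ℂ × Matrix (Fin m) (Fin m) ℂ,
      p ∈ LinearMap.ker (tensorActionL m m m
          (fun i j k => if i = ⟨0, hm⟩ ∧ j = k then 1 else 0)) ↔
        ∃ (mu nu : ℂ) (V : Matrix (Fin m) (Fin m) ℂ),
          p.2.1 = mu • (1 : Matrix (Fin m) (Fin m) ℂ) + V ∧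
          p.2.2 = nu • (1 : Matrix (Fin m) (Fin m) ℂ) - Vᵀ ∧
          p.1 ⟨0, hm⟩ ⟨0, hm⟩ = -(mu + nu) ∧
          (∀ i : Fin m, i ≠ ⟨0, hm⟩ → p.1 i ⟨0, hm⟩ = 0)) ∧
    Module.finrank ℂ (LinearMap.ker (tensorActionL m m m
        (fun i j k => if i = ⟨0, hm⟩ ∧ j = k then 1 else 0))) = 2 * m ^ 2 - m + 1 := by
  have hker : LinearMap.ker (tensorActionL m m m
      (fun i j k => if i = ⟨0, hm⟩ ∧ j = k then 1 else 0)) = LinearMap.range (gmap m hm) := by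
    ext p
    rw [mem_ker_iff m hm p, LinearMap.mem_range]
    constructor
    · rintro ⟨h1, h2, h3⟩
      refine ⟨(p.2.1, p.2.2 ⟨0, hm⟩ ⟨0, hm⟩, fun i j => p.1 i j.1), ?_⟩
      simp only [gmap, LinearMap.coe_mk, AddHom.coe_mk]
      refine Prod.ext ?_ (Prod.ext rfl ?_)
      · funext i j
        show (if h : j = (⟨0, hm⟩ : Fin m) then _ else _) = p.1 i j
        by_cases hj : j = (⟨0, hm⟩ : Fin m)
        · subst hj
          rw [dif_pos rfl]
          by_cases hi : i = (⟨0, hm⟩ : Fin m)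
          · subst hi; rw [if_pos rfl]; linear_combination -h3 ⟨0, hm⟩
          · rw [if_neg hi]; exact (h1 i hi).symm
        · rw [dif_neg hj]
      · funext j k
        show (if j = k then _ else _) = p.2.2 j k
        by_cases hjk : j = k
        · subst hjk
          rw [if_pos rfl]
          linear_combination h3 ⟨0, hm⟩ - h3 j
        · rw [if_neg hjk]
          have hkj : k ≠ j := fun h => hjk h.symm
          linear_combination -h2 k j hkj
    · rintro ⟨q, rfl⟩
      simp only [gmap, LinearMap.coe_mk, AddHom.coe_mk]
      refine ⟨fun i hi => ?_, fun j k hjk => ?_, fun j => ?_⟩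
      · simp only [dite_true, if_neg hi]
      · rw [if_neg (fun h => hjk h.symm)]
        ring
      · simp only [dite_true, if_true]
        ring
  constructor
  · intro p
    rw [mem_ker_iff m hm p]
    exact char m hm p
  · rw [hker, LinearMap.finrank_range_of_inj (gmap_inj m hm)]
    exact rank_eq m hm
end

section
/- Let B = Q + Λ be a nondegenerate bilinear form on ℂ^k where Q is symmetric of rank 1 and Λ is skew-symmetric of rank k−1 with ker(Λ) ∩ ker(Q) = 0 (so k is odd). Then dim h_B = k(k−1)/2. -/
open Matrix

/-- The linear map `X ↦ XB + BXᵗ`; its kernel is the symmetry Lie algebra `h_B`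
of the bilinear form `B`, i.e. the Lie algebra of the stabilizer of `B` under
`g · B = g B gᵗ`. -/
noncomputable def formActionL (n : Type*) [Fintype n] [DecidableEq n]
    (B : Matrix n n ℂ) : Matrix n n ℂ →ₗ[ℂ] Matrix n n ℂ where
  toFun X := X * B + B * Xᵀ
  map_add' X Y := by
    simp only [Matrix.transpose_add, Matrix.add_mul, Matrix.mul_add]
    abel
  map_smul' t X := by
    simp only [Matrix.transpose_smul, Matrix.smul_mul, Matrix.mul_smul,
      RingHom.id_apply, smul_add]

section Aux

variable {k : ℕ}

lemma vmv_left (A : Matrix (Fin k) (Fin k) ℂ) (a b : Fin k → ℂ) :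
    A * vecMulVec a b = vecMulVec (A *ᵥ a) b := by
  ext i j
  simp [mul_apply, vecMulVec_apply, mulVec, dotProduct, Finset.sum_mul, mul_assoc]

lemma vmv_right (A : Matrix (Fin k) (Fin k) ℂ) (a b : Fin k → ℂ) :
    vecMulVec a b * A = vecMulVec a (b ᵥ* A) := by
  ext i j
  simp [mul_apply, vecMulVec_apply, vecMul, dotProduct, Finset.mul_sum, mul_assoc]

lemma vmv_mulVec (a b x : Fin k → ℂ) :
    vecMulVec a b *ᵥ x = (b ⬝ᵥ x) • a := by
  ext i
  simp [vecMulVec_apply, mulVec, dotProduct, Finset.mul_sum, mul_comm, mul_left_comm]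

lemma vmv_transpose (a b : Fin k → ℂ) : (vecMulVec a b)ᵀ = vecMulVec b a := by
  ext i j; simp [vecMulVec_apply, mul_comm]

lemma vmv_zero_left (b : Fin k → ℂ) : vecMulVec (0 : Fin k → ℂ) b = 0 := by
  ext i j; simp [vecMulVec_apply]

lemma vmv_zero_right (a : Fin k → ℂ) : vecMulVec a (0 : Fin k → ℂ) = 0 := by
  ext i j; simp [vecMulVec_apply]

lemma vmv_cancel {a v : Fin k → ℂ} (hv : v ≠ 0)
    (h : vecMulVec a v + vecMulVec v a = 0) : a = 0 := by
  obtain ⟨j0, hj0⟩ : ∃ j0, v j0 ≠ 0 := by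
    by_contra hc; push_neg at hc; exact hv (funext hc)
  have h2 : ∀ i j, a i * v j + v i * a j = 0 := by
    intro i j
    have := congrFun (congrFun h i) j
    simpa [vecMulVec_apply] using this
  have haj : a j0 = 0 := by
    have := h2 j0 j0
    have h3 : (2 : ℂ) * (a j0 * v j0) = 0 := by ring_nf; ring_nf at this; linear_combination this
    have := mul_eq_zero.mp h3
    rcases this with h | h
    · norm_num at h
    · rcases mul_eq_zero.mp h with h | h
      · exact h
      · exact absurd h hj0
  funext i
  have := h2 i j0
  rw [haj, mul_zero, add_zero] at this
  exact (mul_eq_zero.mp this).resolve_right hj0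

end Aux

/-- The submodule of symmetric `k × k` complex matrices. -/
noncomputable def symSub (k : ℕ) : Submodule ℂ (Matrix (Fin k) (Fin k) ℂ) where
  carrier := {S | Sᵀ = S}
  add_mem' := by intro a b ha hb; simp only [Set.mem_setOf_eq] at *; rw [transpose_add, ha, hb]
  zero_mem' := by simp
  smul_mem' := by intro c a ha; simp only [Set.mem_setOf_eq] at *; rw [transpose_smul, ha]

noncomputable def symEquiv (k : ℕ) : (symSub k) ≃ₗ[ℂ] (Sym2 (Fin k) → ℂ) where
  toFun S := Sym2.lift ⟨fun i j => (S : Matrix (Fin k) (Fin k) ℂ) i j,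
    fun i j => by have h := congrFun (congrFun S.2 j) i; simpa using h⟩
  map_add' S T := by
    funext p
    induction p using Sym2.ind with
    | _ i j => simp
  map_smul' c S := by
    funext p
    induction p using Sym2.ind with
    | _ i j => simp
  invFun f := ⟨Matrix.of fun i j => f s(i, j), by
    ext i j; simp [Sym2.eq_swap]⟩
  left_inv S := by ext i j; simp
  right_inv f := by
    funext p
    induction p using Sym2.ind with
    | _ i j => simp

lemma finrank_symSub (k : ℕ) :
    Module.finrank ℂ (symSub k) = (k + 1).choose 2 := by
  rw [(symEquiv k).finrank_eq, Module.finrank_fintype_fun_eq_card, Sym2.card, Fintype.card_fin]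

/-- Right multiplication-by-vector as a linear map on matrices. -/
noncomputable def mulVecL (k : ℕ) (u : Fin k → ℂ) :
    Matrix (Fin k) (Fin k) ℂ →ₗ[ℂ] (Fin k → ℂ) where
  toFun S := S *ᵥ u
  map_add' S T := add_mulVec S T u
  map_smul' c S := smul_mulVec c S u

lemma mulVecL_surj {k : ℕ} (u : Fin k → ℂ) (hu : u ≠ 0) :
    Function.Surjective ((mulVecL k u).comp (symSub k).subtype) := by
  obtain ⟨i0, hi0⟩ : ∃ i0, u i0 ≠ 0 := by
    by_contra hc; push_neg at hc; exact hu (funext hc)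
  intro w
  set z : Fin k → ℂ := fun j => if j = i0 then (u i0)⁻¹ else 0 with hz
  have hzu : z ⬝ᵥ u = 1 := by
    simp [hz, dotProduct, ite_mul, Finset.sum_ite_eq', inv_mul_cancel₀ hi0]
  set S := vecMulVec w z + vecMulVec z w - (w ⬝ᵥ u) • vecMulVec z z with hS
  have hSsym : S ∈ symSub k := by
    show Sᵀ = S
    simp [hS, transpose_add, transpose_sub, transpose_smul, vmv_transpose]
    abel
  refine ⟨⟨S, hSsym⟩, ?_⟩
  show S *ᵥ u = w
  simp only [hS, sub_mulVec, add_mulVec, smul_mulVec, vmv_mulVec, hzu]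
  simp [smul_smul]

lemma rank_one_symm_decomp {k : ℕ} (Q : Matrix (Fin k) (Fin k) ℂ)
    (hQsymm : Qᵀ = Q) (hQrank : Q.rank = 1) :
    ∃ v : Fin k → ℂ, v ≠ 0 ∧ Q = vecMulVec v v := by
  have h1 : Module.finrank ℂ (LinearMap.range Q.mulVecLin) = 1 := hQrank
  obtain ⟨v0, hv0ne, hv0⟩ := finrank_eq_one_iff'.mp h1
  set v1 : Fin k → ℂ := (v0 : Fin k → ℂ) with hv1
  have hv1ne : v1 ≠ 0 := fun h => hv0ne (Subtype.ext h)
  have hcol : ∀ j, ∃ c : ℂ, ∀ i, Q i j = c * v1 i := by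
    intro j
    have hmem : (Q *ᵥ Pi.single j 1) ∈ LinearMap.range Q.mulVecLin :=
      ⟨Pi.single j 1, rfl⟩
    obtain ⟨c, hc⟩ := hv0 ⟨_, hmem⟩
    refine ⟨c, fun i => ?_⟩
    have := congrFun (congrArg (Subtype.val) hc) i
    simp only [Submodule.coe_smul, Pi.smul_apply, smul_eq_mul] at this
    simpa [mulVec_single, hv1] using this.symm
  choose c hc using hcol
  have hQ : Q = vecMulVec v1 c := by
    ext i j; rw [vecMulVec_apply, hc j i, mul_comm]
  obtain ⟨i0, hi0⟩ : ∃ i0, v1 i0 ≠ 0 := by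
    by_contra hcon; push_neg at hcon; exact hv1ne (funext hcon)
  have hsym : ∀ i j, v1 i * c j = v1 j * c i := by
    intro i j
    have h1 := congrFun (congrFun hQsymm j) i
    rw [hQ] at h1
    simpa [vecMulVec_apply] using h1
  have hci0 : c i0 ≠ 0 := by
    intro h0
    have hc0 : c = 0 := by
      funext j
      have := hsym i0 j
      rw [h0, mul_zero] at this
      exact (mul_eq_zero.mp this).resolve_left hi0
    have : Q = 0 := by rw [hQ, hc0]; ext i j; simp [vecMulVec_apply]
    rw [this] at hQrank
    simp [Matrix.rank_zero] at hQrank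
  set t : ℂ := c i0 / v1 i0 with ht
  have htne : t ≠ 0 := div_ne_zero hci0 hi0
  have hct : ∀ j, c j = t * v1 j := by
    intro j
    have := hsym i0 j
    rw [ht, div_mul_eq_mul_div, eq_div_iff hi0]
    linear_combination this
  obtain ⟨s, hs⟩ : ∃ s : ℂ, s ^ 2 = t := IsAlgClosed.exists_pow_nat_eq t (by norm_num)
  have hsne : s ≠ 0 := by
    intro h; rw [h] at hs; simp at hs; exact htne hs.symm
  refine ⟨s • v1, ?_, ?_⟩
  · intro h
    apply hv1ne
    funext i
    have := congrFun h i
    simp only [Pi.smul_apply, smul_eq_mul, Pi.zero_apply] at this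
    exact (mul_eq_zero.mp this).resolve_left hsne
  · rw [hQ]
    ext i j
    simp only [vecMulVec_apply, Pi.smul_apply, smul_eq_mul]
    rw [hct j, ← hs]
    ring

lemma exists_ker_vec {k : ℕ} (hk : 0 < k) (L : Matrix (Fin k) (Fin k) ℂ)
    (hLrank : L.rank = k - 1) :
    ∃ u : Fin k → ℂ, u ≠ 0 ∧ L *ᵥ u = 0 := by
  have hne : LinearMap.ker L.mulVecLin ≠ ⊥ := by
    intro hbot
    have hinj : Function.Injective L.mulVecLin := by
      rwa [← LinearMap.ker_eq_bot]
    have := LinearMap.finrank_range_of_inj hinj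
    rw [Module.finrank_fintype_fun_eq_card, Fintype.card_fin] at this
    rw [Matrix.rank] at hLrank
    omega
  obtain ⟨u, hu, hune⟩ := Submodule.exists_mem_ne_zero_of_ne_bot hne
  exact ⟨u, hune, hu⟩

set_option synthInstance.maxHeartbeats 1000000 in
set_option maxHeartbeats 2000000 in
/-- Case A4: for a nondegenerate bilinear form `B = Q + Λ` on `ℂ^k` with `Q`
symmetric of rank 1 and `Λ` skew-symmetric of rank `k−1` (so `k` is odd),
`dim h_B = k(k−1)/2`. -/
theorem dim_hB_caseA4 (k : ℕ) (hodd : Odd k)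
    (B Q L : Matrix (Fin k) (Fin k) ℂ) (hB : B = Q + L)
    (hQsymm : Qᵀ = Q) (hQrank : Q.rank = 1)
    (hLskew : Lᵀ = -L) (hLrank : L.rank = k - 1)
    (hBnd : IsUnit B.det) :
    Module.finrank ℂ (LinearMap.ker (formActionL (Fin k) B)) = k * (k - 1) / 2 := by
  obtain ⟨v, hvne, hQv⟩ := rank_one_symm_decomp Q hQsymm hQrank
  have hk : 0 < k := hodd.pos
  obtain ⟨u, hune, hLu⟩ := exists_ker_vec hk L hLrank
  have hBT : Bᵀ = Q - L := by
    rw [hB, transpose_add, hQsymm, hLskew, ← sub_eq_add_neg]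
  have hBu : B *ᵥ u = (v ⬝ᵥ u) • v := by
    rw [hB, add_mulVec, hLu, add_zero, hQv, vmv_mulVec]
  have hc : v ⬝ᵥ u ≠ 0 := by
    intro h0
    have hz : B *ᵥ u = 0 := by rw [hBu, h0, zero_smul]
    have hu0 : u = 0 := by
      have h2 := congrArg (fun w => B⁻¹ *ᵥ w) hz
      simpa [mulVec_mulVec, nonsing_inv_mul B hBnd] using h2
    exact hune hu0
  have hBinvv : B⁻¹ *ᵥ v = (v ⬝ᵥ u)⁻¹ • u := by
    have h1 : B⁻¹ *ᵥ (B *ᵥ u) = u := by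
      rw [mulVec_mulVec, nonsing_inv_mul B hBnd, one_mulVec]
    rw [hBu, mulVec_smul] at h1
    have h2 := congrArg (fun w => (v ⬝ᵥ u)⁻¹ • w) h1
    simp only [smul_smul, inv_mul_cancel₀ hc, one_smul] at h2
    exact h2
  -- Forward direction: kernel elements give symmetric matrices killed by `u`
  have forward : ∀ X : Matrix (Fin k) (Fin k) ℂ, X * B + B * Xᵀ = 0 →
      ((X * B)ᵀ = X * B ∧ (X * B) *ᵥ u = 0) := by
    intro X hX
    have hXT : X * Bᵀ + Bᵀ * Xᵀ = 0 := by
      have h2 := congrArg Matrix.transpose hX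
      rw [transpose_add, transpose_mul, transpose_mul, transpose_transpose,
        transpose_zero] at h2
      rw [add_comm]
      exact h2
    have hQpart : X * Q + Q * Xᵀ = 0 := by
      have hsum : (X * B + B * Xᵀ) + (X * Bᵀ + Bᵀ * Xᵀ) = 0 := by
        rw [hX, hXT, add_zero]
      rw [hBT, hB, mul_add, add_mul, mul_sub, sub_mul] at hsum
      have h3 : (X * Q + Q * Xᵀ) + (X * Q + Q * Xᵀ) = 0 := by
        rw [← hsum]; abel
      have h4 : (2 : ℂ) • (X * Q + Q * Xᵀ) = 0 := by
        rw [two_smul]; exact h3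
      rcases smul_eq_zero.mp h4 with h | h
      · norm_num at h
      · exact h
    have hXv : X *ᵥ v = 0 := by
      apply vmv_cancel hvne
      rw [hQv, vmv_left, vmv_right, vecMul_transpose] at hQpart
      exact hQpart
    have hXQ : X * Q = 0 := by
      rw [hQv, vmv_left, hXv, vmv_zero_left]
    have hQXT : Q * Xᵀ = 0 := by
      have h5 := congrArg Matrix.transpose hXQ
      rwa [transpose_mul, hQsymm, transpose_zero] at h5
    have hLpart : X * L + L * Xᵀ = 0 := by
      have h6 := hX
      rw [hB, mul_add, add_mul] at h6
      rw [hXQ, zero_add, hQXT] at h6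
      rw [← h6]; abel
    have hLXT : L * Xᵀ = -(X * L) := eq_neg_of_add_eq_zero_right hLpart
    constructor
    · have h5 : X * B = X * L := by rw [hB, mul_add, hXQ, zero_add]
      rw [h5, transpose_mul, hLskew, neg_mul, hLXT, neg_neg]
    · rw [← mulVec_mulVec, hBu, mulVec_smul, hXv, smul_zero]
  -- Backward direction
  have backward : ∀ S : Matrix (Fin k) (Fin k) ℂ, Sᵀ = S → S *ᵥ u = 0 →
      (S * B⁻¹) * B + B * (S * B⁻¹)ᵀ = 0 := by
    intro S hS1 hS2
    have huS : u ᵥ* S = 0 := by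
      have h1 := mulVec_transpose S u
      rw [hS1, hS2] at h1
      exact h1.symm
    have e1 : S * B⁻¹ * B = S := by
      rw [mul_assoc, nonsing_inv_mul B hBnd, mul_one]
    have e2 : (S * B⁻¹)ᵀ = B⁻¹ᵀ * S := by
      rw [transpose_mul, hS1]
    have key : Q * (B⁻¹ᵀ * S) = 0 := by
      rw [hQv, vmv_right, ← vecMul_vecMul, vecMul_transpose, hBinvv,
        smul_vecMul, huS, smul_zero, vmv_zero_right]
    have hBBT : B + Bᵀ = Q + Q := by
      rw [hBT, hB]; abel
    have hTinv : B⁻¹ᵀ = Bᵀ⁻¹ := transpose_nonsing_inv B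
    have hBTd : IsUnit Bᵀ.det := by rwa [det_transpose]
    have hid : B⁻¹ * (B + Bᵀ) * B⁻¹ᵀ = B⁻¹ + B⁻¹ᵀ := by
      rw [mul_add, add_mul, nonsing_inv_mul B hBnd, one_mul, hTinv,
        mul_assoc, mul_nonsing_inv Bᵀ hBTd, mul_one, add_comm]
    have hQQ : (Q + Q) * (B⁻¹ᵀ * S) = 0 := by rw [add_mul, key, add_zero]
    have hBinvsum : (B⁻¹ + B⁻¹ᵀ) * S = 0 := by
      rw [← hid, hBBT, mul_assoc B⁻¹ (Q + Q) B⁻¹ᵀ,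
        mul_assoc B⁻¹ ((Q + Q) * B⁻¹ᵀ) S, mul_assoc (Q + Q) B⁻¹ᵀ S, hQQ, mul_zero]
    have hneg : B⁻¹ᵀ * S = -(B⁻¹ * S) := by
      rw [add_mul] at hBinvsum
      exact eq_neg_of_add_eq_zero_right hBinvsum
    rw [e1, e2, hneg, mul_neg, ← mul_assoc, mul_nonsing_inv B hBnd, one_mul,
      add_neg_cancel]
  -- membership rephrasings
  have memker : ∀ X : Matrix (Fin k) (Fin k) ℂ,
      X ∈ LinearMap.ker (formActionL (Fin k) B) ↔ X * B + B * Xᵀ = 0 := by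
    intro X
    rw [LinearMap.mem_ker]
    rfl
  set μ : (symSub k) →ₗ[ℂ] (Fin k → ℂ) := (mulVecL k u).comp (symSub k).subtype with hμ
  have memμ : ∀ S : symSub k, S ∈ LinearMap.ker μ ↔ (S : Matrix (Fin k) (Fin k) ℂ) *ᵥ u = 0 := by
    intro S
    rw [LinearMap.mem_ker]
    rfl
  -- the linear equivalence
  have e : (LinearMap.ker (formActionL (Fin k) B)) ≃ₗ[ℂ] (LinearMap.ker μ) :=
  { toFun := fun X =>
      ⟨⟨(X : Matrix (Fin k) (Fin k) ℂ) * B, (forward X.1 ((memker X.1).mp X.2)).1⟩,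
        (memμ _).mpr (forward X.1 ((memker X.1).mp X.2)).2⟩
    map_add' := by
      intro X Y
      apply Subtype.ext; apply Subtype.ext
      show ((X : Matrix (Fin k) (Fin k) ℂ) + Y) * B = X.1 * B + Y.1 * B
      rw [add_mul]
    map_smul' := by
      intro c X
      apply Subtype.ext; apply Subtype.ext
      show (c • (X : Matrix (Fin k) (Fin k) ℂ)) * B = c • (X.1 * B)
      rw [smul_mul_assoc]
    invFun := fun S =>
      ⟨(S : Matrix (Fin k) (Fin k) ℂ) * B⁻¹,
        (memker _).mpr (backward S.1.1 S.1.2 ((memμ S.1).mp S.2))⟩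
    left_inv := by
      intro X
      apply Subtype.ext
      show (X : Matrix (Fin k) (Fin k) ℂ) * B * B⁻¹ = X.1
      rw [mul_assoc, mul_nonsing_inv B hBnd, mul_one]
    right_inv := by
      intro S
      apply Subtype.ext; apply Subtype.ext
      show (S : Matrix (Fin k) (Fin k) ℂ) * B⁻¹ * B = S.1.1
      rw [mul_assoc, nonsing_inv_mul B hBnd, mul_one] }
  have hfe : Module.finrank ℂ (LinearMap.ker (formActionL (Fin k) B)) =
      Module.finrank ℂ (LinearMap.ker μ) := LinearEquiv.finrank_eq e
  rw [hfe]
  -- rank-nullity for μ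
  have hrn := LinearMap.finrank_range_add_finrank_ker μ
  have hsurj : LinearMap.range μ = ⊤ := LinearMap.range_eq_top.mpr (mulVecL_surj u hune)
  rw [hsurj, finrank_top, Module.finrank_fintype_fun_eq_card, Fintype.card_fin,
    finrank_symSub] at hrn
  -- arithmetic
  obtain ⟨m, hm⟩ := hodd
  subst hm
  have a1 : (2 * m + 1) * (2 * m + 1 - 1) / 2 = (2 * m + 1) * m := by
    have : (2 * m + 1) * (2 * m + 1 - 1) = ((2 * m + 1) * m) * 2 := by
      simp only [Nat.add_sub_cancel]
      ring
    rw [this, Nat.mul_div_cancel _ (by norm_num)]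
  have a2 : (2 * m + 1 + 1).choose 2 = (m + 1) * (2 * m + 1) := by
    rw [Nat.choose_two_right]
    have : (2 * m + 1 + 1) * (2 * m + 1 + 1 - 1) = ((m + 1) * (2 * m + 1)) * 2 := by
      simp only [Nat.add_sub_cancel]
      ring
    rw [this, Nat.mul_div_cancel _ (by norm_num)]
  rw [a1]
  rw [a2] at hrn
  have : (m + 1) * (2 * m + 1) = (2 * m + 1) * m + (2 * m + 1) := by ring
  omega
end

section
/- For m ≥ 14 even, the tensor T_{max,even,m} = a₁⊗b₁⊗c₁ + Σ_{ρ=2}^m a₁⊗b_ρ⊗c_ρ + Σ_{ρ=2}^m a_ρ⊗b₁⊗c_ρ + [Σ_{ξ=2}^{m/2}(a_ξ⊗b_{ξ+m/2−1} − a_{ξ+m/2−1}⊗b_ξ)]⊗c_m satisfies dim G_{T_{max,even,m}} = m²/2 + 3m/2 − 2; in particular, the annihilator in gl_m ⊕ gl_m ⊕ gl_m of T_{max,even,m} has dimension m²/2 + 3m/2. -/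
open scoped BigOperators

/-- The tensor `T_{max,even,m}` (0-indexed coordinates). -/
noncomputable def TmaxEven (m : ℕ) (hm : 0 < m) : Fin m → Fin m → Fin m → ℂ :=
  fun i j k =>
    (if i = ⟨0, hm⟩ ∧ j = ⟨0, hm⟩ ∧ k = ⟨0, hm⟩ then 1 else 0)
    + (if i = ⟨0, hm⟩ ∧ j ≠ ⟨0, hm⟩ ∧ k = j then 1 else 0)
    + (if j = ⟨0, hm⟩ ∧ i ≠ ⟨0, hm⟩ ∧ k = i then 1 else 0)
    + (if (k : ℕ) = m - 1 ∧ 1 ≤ (i : ℕ) ∧ (i : ℕ) ≤ m / 2 - 1 ∧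
          (j : ℕ) = (i : ℕ) + m / 2 - 1 then 1 else 0)
    - (if (k : ℕ) = m - 1 ∧ 1 ≤ (j : ℕ) ∧ (j : ℕ) ≤ m / 2 - 1 ∧
          (i : ℕ) = (j : ℕ) + m / 2 - 1 then 1 else 0)

namespace AnnT

/-- the symplectic-type form entries -/
noncomputable def omf (m : ℕ) (i j : ℕ) : ℂ :=
  (if 1 ≤ i ∧ i ≤ m / 2 - 1 ∧ j = i + m / 2 - 1 then 1 else 0)
  - (if 1 ≤ j ∧ j ≤ m / 2 - 1 ∧ i = j + m / 2 - 1 then 1 else 0)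

variable {m : ℕ}

lemma omf_antisymm (i j : ℕ) : omf m i j = - omf m j i := by
  unfold omf; ring

lemma omf_zero_left (h14 : 14 ≤ m) (j : ℕ) : omf m 0 j = 0 := by
  unfold omf
  split_ifs <;> (first | ring1 | (exfalso; omega))

lemma omf_zero_right (h14 : 14 ≤ m) (i : ℕ) : omf m i 0 = 0 := by
  unfold omf
  split_ifs <;> (first | ring1 | (exfalso; omega))

lemma omf_t_left (h14 : 14 ≤ m) (he : m % 2 = 0) (j : ℕ) : omf m (m-1) j = 0 := by
  unfold omf
  split_ifs <;> (first | ring1 | (exfalso; omega))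

lemma omf_t_right (h14 : 14 ≤ m) (he : m % 2 = 0) (i : ℕ) : omf m i (m-1) = 0 := by
  unfold omf
  split_ifs <;> (first | ring1 | (exfalso; omega))

lemma omf_diag (i : ℕ) : omf m i i = 0 := by
  unfold omf
  split_ifs <;> (first | ring1 | (exfalso; omega))

lemma omf_one_h (h14 : 14 ≤ m) : omf m 1 (m/2) = 1 := by
  unfold omf
  split_ifs <;> (first | ring1 | (exfalso; omega))

/-- generic sum collapse -/
lemma sum_if_val {v : ℕ} (hv : v < m) (P : Prop) [Decidable P] (f : Fin m → ℂ) :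
    (∑ l : Fin m, if (l : ℕ) = v ∧ P then f l else 0) = if P then f ⟨v, hv⟩ else 0 := by
  rw [Finset.sum_eq_single (⟨v, hv⟩ : Fin m)]
  · simp
  · intro b _ hb
    rw [if_neg]
    rintro ⟨h1, -⟩
    exact hb (Fin.ext h1)
  · simp

lemma sum_if_val' {v : ℕ} (hv : v < m) (P : Prop) [Decidable P] (f : Fin m → ℂ) :
    (∑ l : Fin m, if P ∧ (l : ℕ) = v then f l else 0) = if P then f ⟨v, hv⟩ else 0 := by
  rw [Finset.sum_eq_single (⟨v, hv⟩ : Fin m)]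
  · simp
  · intro b _ hb
    rw [if_neg]
    rintro ⟨-, h1⟩
    exact hb (Fin.ext h1)
  · simp

end AnnT

namespace AnnT
variable {m : ℕ}

def z0 (m : ℕ) (h14 : 14 ≤ m) : Fin m := ⟨0, lt_of_lt_of_le (by norm_num) h14⟩
def zt (m : ℕ) (h14 : 14 ≤ m) : Fin m := ⟨m - 1, by omega⟩

lemma Tval (h0 : 0 < m) (i j k : Fin m) :
    TmaxEven m h0 i j k =
      (if (i : ℕ) = 0 ∧ ((j : ℕ) = 0 ∧ (k : ℕ) = 0) then 1 else 0)
      + (if (i : ℕ) = 0 ∧ ((j : ℕ) ≠ 0 ∧ (k : ℕ) = (j : ℕ)) then 1 else 0)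
      + (if (j : ℕ) = 0 ∧ ((i : ℕ) ≠ 0 ∧ (k : ℕ) = (i : ℕ)) then 1 else 0)
      + (if (k : ℕ) = m - 1 then omf m (i : ℕ) (j : ℕ) else 0) := by
  unfold TmaxEven omf
  simp only [Fin.ext_iff, Fin.val_mk, ne_eq]
  split_ifs <;> (first | ring1 | (exfalso; omega))

lemma sum_if_val0 {v : ℕ} (hv : v < m) (f : Fin m → ℂ) :
    (∑ l : Fin m, if (l : ℕ) = v then f l else 0) = f ⟨v, hv⟩ := by
  rw [Finset.sum_eq_single (⟨v, hv⟩ : Fin m)]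
  · simp
  · intro b _ hb
    rw [if_neg]
    intro h1
    exact hb (Fin.ext h1)
  · simp

lemma sum_if_val3 (P : Prop) [Decidable P] (k : Fin m) (f : Fin m → ℂ) :
    (∑ l : Fin m, if P ∧ ((l : ℕ) ≠ 0 ∧ (k : ℕ) = (l : ℕ)) then f l else 0)
      = if P ∧ (k : ℕ) ≠ 0 then f k else 0 := by
  rw [Finset.sum_eq_single k]
  · exact if_congr (by tauto) rfl rfl
  · intro b _ hb
    rw [if_neg]
    rintro ⟨-, -, h⟩
    exact hb (Fin.ext h.symm)
  · simp

lemma sum_if_const (c : Prop) [Decidable c] (f : Fin m → ℂ) :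
    (∑ l : Fin m, if c then f l else 0) = if c then ∑ l, f l else 0 := by
  split_ifs <;> simp

lemma sumX (h14 : 14 ≤ m) (h0 : 0 < m) (X : Matrix (Fin m) (Fin m) ℂ) (i j k : Fin m) :
    (∑ i', X i i' * TmaxEven m h0 i' j k) =
      (if (j : ℕ) = 0 ∧ (k : ℕ) = 0 then X i (z0 m h14) else 0)
      + (if (j : ℕ) ≠ 0 ∧ (k : ℕ) = (j : ℕ) then X i (z0 m h14) else 0)
      + (if (j : ℕ) = 0 ∧ (k : ℕ) ≠ 0 then X i k else 0)
      + (if (k : ℕ) = m - 1 then ∑ l, X i l * omf m (l : ℕ) (j : ℕ) else 0) := by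
  have step : ∀ l : Fin m, X i l * TmaxEven m h0 l j k =
      (if (l : ℕ) = 0 ∧ ((j : ℕ) = 0 ∧ (k : ℕ) = 0) then X i l else 0)
      + (if (l : ℕ) = 0 ∧ ((j : ℕ) ≠ 0 ∧ (k : ℕ) = (j : ℕ)) then X i l else 0)
      + (if ((j : ℕ) = 0) ∧ ((l : ℕ) ≠ 0 ∧ (k : ℕ) = (l : ℕ)) then X i l else 0)
      + (if (k : ℕ) = m - 1 then X i l * omf m (l : ℕ) (j : ℕ) else 0) := by
    intro l
    rw [Tval h0]
    split_ifs <;> (first | ring1 | (exfalso; omega))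
  rw [Finset.sum_congr rfl fun l _ => step l]
  rw [Finset.sum_add_distrib, Finset.sum_add_distrib, Finset.sum_add_distrib]
  rw [sum_if_val (by omega : 0 < m), sum_if_val (by omega : 0 < m),
    sum_if_val3, sum_if_const]
  rfl

lemma sumY (h14 : 14 ≤ m) (h0 : 0 < m) (Y : Matrix (Fin m) (Fin m) ℂ) (i j k : Fin m) :
    (∑ j', Y j j' * TmaxEven m h0 i j' k) =
      (if (i : ℕ) = 0 ∧ (k : ℕ) = 0 then Y j (z0 m h14) else 0)
      + (if (i : ℕ) = 0 ∧ (k : ℕ) ≠ 0 then Y j k else 0)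
      + (if (i : ℕ) ≠ 0 ∧ (k : ℕ) = (i : ℕ) then Y j (z0 m h14) else 0)
      + (if (k : ℕ) = m - 1 then ∑ l, Y j l * omf m (i : ℕ) (l : ℕ) else 0) := by
  have step : ∀ l : Fin m, Y j l * TmaxEven m h0 i l k =
      (if (l : ℕ) = 0 ∧ ((i : ℕ) = 0 ∧ (k : ℕ) = 0) then Y j l else 0)
      + (if ((i : ℕ) = 0) ∧ ((l : ℕ) ≠ 0 ∧ (k : ℕ) = (l : ℕ)) then Y j l else 0)
      + (if (l : ℕ) = 0 ∧ ((i : ℕ) ≠ 0 ∧ (k : ℕ) = (i : ℕ)) then Y j l else 0)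
      + (if (k : ℕ) = m - 1 then Y j l * omf m (i : ℕ) (l : ℕ) else 0) := by
    intro l
    rw [Tval h0]
    split_ifs <;> (first | ring1 | (exfalso; omega))
  rw [Finset.sum_congr rfl fun l _ => step l]
  rw [Finset.sum_add_distrib, Finset.sum_add_distrib, Finset.sum_add_distrib]
  rw [sum_if_val (by omega : 0 < m), sum_if_val (by omega : 0 < m),
    sum_if_val3, sum_if_const]
  rfl

lemma sumZ (h14 : 14 ≤ m) (h0 : 0 < m) (Z : Matrix (Fin m) (Fin m) ℂ) (i j k : Fin m) :
    (∑ k', Z k k' * TmaxEven m h0 i j k') =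
      (if (i : ℕ) = 0 ∧ (j : ℕ) = 0 then Z k (z0 m h14) else 0)
      + (if (i : ℕ) = 0 ∧ (j : ℕ) ≠ 0 then Z k j else 0)
      + (if (j : ℕ) = 0 ∧ (i : ℕ) ≠ 0 then Z k i else 0)
      + Z k (zt m h14) * omf m (i : ℕ) (j : ℕ) := by
  have step : ∀ l : Fin m, Z k l * TmaxEven m h0 i j l =
      (if (l : ℕ) = 0 ∧ ((i : ℕ) = 0 ∧ (j : ℕ) = 0) then Z k l else 0)
      + (if (l : ℕ) = (j : ℕ) ∧ ((i : ℕ) = 0 ∧ (j : ℕ) ≠ 0) then Z k l else 0)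
      + (if (l : ℕ) = (i : ℕ) ∧ ((j : ℕ) = 0 ∧ (i : ℕ) ≠ 0) then Z k l else 0)
      + (if (l : ℕ) = m - 1 then Z k l * omf m (i : ℕ) (j : ℕ) else 0) := by
    intro l
    rw [Tval h0]
    split_ifs <;> (first | ring1 | (exfalso; omega))
  rw [Finset.sum_congr rfl fun l _ => step l]
  rw [Finset.sum_add_distrib, Finset.sum_add_distrib, Finset.sum_add_distrib]
  rw [sum_if_val (by omega : 0 < m), sum_if_val j.isLt, sum_if_val i.isLt,
    sum_if_val0 (by omega : m - 1 < m)]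
  simp only [Fin.eta]
  rfl

/-- The collapsed kernel equation. -/
noncomputable def EE (m : ℕ) (h14 : 14 ≤ m)
    (p : Matrix (Fin m) (Fin m) ℂ × Matrix (Fin m) (Fin m) ℂ × Matrix (Fin m) (Fin m) ℂ)
    (i j k : Fin m) : ℂ :=
  ((if (j : ℕ) = 0 ∧ (k : ℕ) = 0 then p.1 i (z0 m h14) else 0)
      + (if (j : ℕ) ≠ 0 ∧ (k : ℕ) = (j : ℕ) then p.1 i (z0 m h14) else 0)
      + (if (j : ℕ) = 0 ∧ (k : ℕ) ≠ 0 then p.1 i k else 0)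
      + (if (k : ℕ) = m - 1 then ∑ l, p.1 i l * omf m (l : ℕ) (j : ℕ) else 0))
  + ((if (i : ℕ) = 0 ∧ (k : ℕ) = 0 then p.2.1 j (z0 m h14) else 0)
      + (if (i : ℕ) = 0 ∧ (k : ℕ) ≠ 0 then p.2.1 j k else 0)
      + (if (i : ℕ) ≠ 0 ∧ (k : ℕ) = (i : ℕ) then p.2.1 j (z0 m h14) else 0)
      + (if (k : ℕ) = m - 1 then ∑ l, p.2.1 j l * omf m (i : ℕ) (l : ℕ) else 0))
  + ((if (i : ℕ) = 0 ∧ (j : ℕ) = 0 then p.2.2 k (z0 m h14) else 0)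
      + (if (i : ℕ) = 0 ∧ (j : ℕ) ≠ 0 then p.2.2 k j else 0)
      + (if (j : ℕ) = 0 ∧ (i : ℕ) ≠ 0 then p.2.2 k i else 0)
      + p.2.2 k (zt m h14) * omf m (i : ℕ) (j : ℕ))

lemma ker_iff (h14 : 14 ≤ m) (h0 : 0 < m)
    (p : Matrix (Fin m) (Fin m) ℂ × Matrix (Fin m) (Fin m) ℂ × Matrix (Fin m) (Fin m) ℂ) :
    p ∈ LinearMap.ker (tensorActionL m m m (TmaxEven m h0)) ↔
      ∀ i j k, EE m h14 p i j k = 0 := by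
  have happ : ∀ i j k, tensorActionL m m m (TmaxEven m h0) p i j k = EE m h14 p i j k := by
    intro i j k
    show (∑ i', p.1 i i' * TmaxEven m h0 i' j k) + (∑ j', p.2.1 j j' * TmaxEven m h0 i j' k) +
      (∑ k', p.2.2 k k' * TmaxEven m h0 i j k') = _
    rw [sumX h14 h0, sumY h14 h0, sumZ h14 h0]
    rfl
  rw [LinearMap.mem_ker]
  constructor
  · intro h i j k
    rw [← happ i j k, h]
    rfl
  · intro h
    funext i j k
    rw [happ i j k, h i j k]
    rfl

end AnnT

namespace AnnT
variable {m : ℕ}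

lemma sum_omf_lo (h14 : 14 ≤ m) (f : Fin m → ℂ) {j : ℕ}
    (h1 : 1 ≤ j) (h2 : j ≤ m / 2 - 1) :
    (∑ l : Fin m, f l * omf m (l : ℕ) j) = -f ⟨j + m / 2 - 1, by omega⟩ := by
  have step : ∀ l : Fin m, f l * omf m (l : ℕ) j =
      (if (l : ℕ) = j + m / 2 - 1 then -f l else 0) := by
    intro l
    unfold omf
    split_ifs <;> (first | ring1 | (exfalso; omega))
  rw [Finset.sum_congr rfl fun l _ => step l, sum_if_val0 (by omega)]

lemma sum_omf_hi (h14 : 14 ≤ m) (he : m % 2 = 0) (f : Fin m → ℂ) {j : ℕ}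
    (h1 : m / 2 ≤ j) (h2 : j ≤ m - 2) :
    (∑ l : Fin m, f l * omf m (l : ℕ) j) = f ⟨j - m / 2 + 1, by omega⟩ := by
  have step : ∀ l : Fin m, f l * omf m (l : ℕ) j =
      (if (l : ℕ) = j - m / 2 + 1 then f l else 0) := by
    intro l
    unfold omf
    split_ifs <;> (first | ring1 | (exfalso; omega))
  rw [Finset.sum_congr rfl fun l _ => step l, sum_if_val0 (by omega)]

lemma sum_omf_row_lo (h14 : 14 ≤ m) (f : Fin m → ℂ) {i : ℕ}
    (h1 : 1 ≤ i) (h2 : i ≤ m / 2 - 1) :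
    (∑ l : Fin m, f l * omf m i (l : ℕ)) = f ⟨i + m / 2 - 1, by omega⟩ := by
  have step : ∀ l : Fin m, f l * omf m i (l : ℕ) =
      (if (l : ℕ) = i + m / 2 - 1 then f l else 0) := by
    intro l
    unfold omf
    split_ifs <;> (first | ring1 | (exfalso; omega))
  rw [Finset.sum_congr rfl fun l _ => step l, sum_if_val0 (by omega)]

lemma sum_omf_row_hi (h14 : 14 ≤ m) (he : m % 2 = 0) (f : Fin m → ℂ) {i : ℕ}
    (h1 : m / 2 ≤ i) (h2 : i ≤ m - 2) :
    (∑ l : Fin m, f l * omf m i (l : ℕ)) = -f ⟨i - m / 2 + 1, by omega⟩ := by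
  have step : ∀ l : Fin m, f l * omf m i (l : ℕ) =
      (if (l : ℕ) = i - m / 2 + 1 then -f l else 0) := by
    intro l
    unfold omf
    split_ifs <;> (first | ring1 | (exfalso; omega))
  rw [Finset.sum_congr rfl fun l _ => step l, sum_if_val0 (by omega)]

lemma sum_omf_col0 (h14 : 14 ≤ m) (f : Fin m → ℂ) :
    (∑ l : Fin m, f l * omf m (l : ℕ) 0) = 0 := by
  rw [Finset.sum_congr rfl fun l _ => by rw [omf_zero_right h14, mul_zero]]
  exact Finset.sum_const_zero

lemma sum_omf_colt (h14 : 14 ≤ m) (he : m % 2 = 0) (f : Fin m → ℂ) :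
    (∑ l : Fin m, f l * omf m (l : ℕ) (m - 1)) = 0 := by
  rw [Finset.sum_congr rfl fun l _ => by rw [omf_t_right h14 he, mul_zero]]
  exact Finset.sum_const_zero

lemma sum_omf_row0 (h14 : 14 ≤ m) (f : Fin m → ℂ) :
    (∑ l : Fin m, f l * omf m 0 (l : ℕ)) = 0 := by
  rw [Finset.sum_congr rfl fun l _ => by rw [omf_zero_left h14, mul_zero]]
  exact Finset.sum_const_zero

lemma sum_omf_rowt (h14 : 14 ≤ m) (he : m % 2 = 0) (f : Fin m → ℂ) :
    (∑ l : Fin m, f l * omf m (m - 1) (l : ℕ)) = 0 := by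
  rw [Finset.sum_congr rfl fun l _ => by rw [omf_t_left h14 he, mul_zero]]
  exact Finset.sum_const_zero

/-- `Ω² = -1` on the middle block. -/
lemma omsq (h14 : 14 ≤ m) (he : m % 2 = 0) (q : ℕ) {j : ℕ}
    (hj1 : 1 ≤ j) (hj2 : j ≤ m - 2) :
    (∑ l : Fin m, omf m q (l : ℕ) * omf m (l : ℕ) j) = -(if q = j then 1 else 0) := by
  rcases Nat.lt_or_ge j (m / 2) with hj | hj
  · rw [sum_omf_lo h14 (fun l => omf m q (l : ℕ)) hj1 (by omega)]
    show -omf m q (j + m / 2 - 1) = _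
    unfold omf
    split_ifs <;> (first | ring1 | (exfalso; omega))
  · rw [sum_omf_hi h14 he (fun l => omf m q (l : ℕ)) hj hj2]
    show omf m q (j - m / 2 + 1) = _
    unfold omf
    split_ifs <;> (first | ring1 | (exfalso; omega))

end AnnT

namespace AnnT
variable {m : ℕ}

/-- Parameter space for the annihilator: row 0 of X, row 0 of Y, column (m-1) of Y
(except its 0 entry), and a symmetric (m-2)×(m-2) matrix. -/
abbrev Q (m : ℕ) : Type :=
  (Fin m → ℂ) × (Fin m → ℂ) × ({i : Fin m // (i : ℕ) ≠ 0} → ℂ) × (Sym2 (Fin (m - 2)) → ℂ)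

noncomputable def Sy (m : ℕ) (s : Sym2 (Fin (m - 2)) → ℂ) (i j : Fin m) : ℂ :=
  if h : (1 ≤ (i : ℕ) ∧ (i : ℕ) ≤ m - 2) ∧ (1 ≤ (j : ℕ) ∧ (j : ℕ) ≤ m - 2) then
    s (Sym2.mk ⟨(i : ℕ) - 1, by omega⟩ ⟨(j : ℕ) - 1, by omega⟩)
  else 0

lemma Sy_symm (s : Sym2 (Fin (m - 2)) → ℂ) (i j : Fin m) : Sy m s i j = Sy m s j i := by
  unfold Sy
  by_cases h : (1 ≤ (i : ℕ) ∧ (i : ℕ) ≤ m - 2) ∧ (1 ≤ (j : ℕ) ∧ (j : ℕ) ≤ m - 2)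
  · rw [dif_pos h, dif_pos (by tauto), Sym2.eq_swap]
  · rw [dif_neg h, dif_neg (by tauto)]

lemma Sy_out (s : Sym2 (Fin (m - 2)) → ℂ) (i j : Fin m)
    (h : ¬((1 ≤ (i : ℕ) ∧ (i : ℕ) ≤ m - 2) ∧ (1 ≤ (j : ℕ) ∧ (j : ℕ) ≤ m - 2))) :
    Sy m s i j = 0 := by
  unfold Sy; rw [dif_neg h]

lemma zt_val (h14 : 14 ≤ m) : ((zt m h14 : Fin m) : ℕ) = m - 1 := rfl
lemma z0_val (h14 : 14 ≤ m) : ((z0 m h14 : Fin m) : ℕ) = 0 := rfl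

/-- scalar μ = β + γ -/
noncomputable def muv (m : ℕ) (h14 : 14 ≤ m) (q : Q m) : ℂ :=
  q.2.1 (z0 m h14) + q.2.2.1 ⟨zt m h14, by show m - 1 ≠ 0; omega⟩

/-- construction: the Y matrix -/
noncomputable def Yc (m : ℕ) (h14 : 14 ≤ m) (q : Q m) : Matrix (Fin m) (Fin m) ℂ :=
  fun i j =>
    if hi : (i : ℕ) = 0 then q.2.1 j
    else if (j : ℕ) = m - 1 then q.2.2.1 ⟨i, hi⟩
    else if (i : ℕ) = m - 1 then 0
    else if (j : ℕ) = 0 then 0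
    else (-∑ l, Sy m q.2.2.2 i l * omf m (l : ℕ) (j : ℕ))
         + muv m h14 q / 2 * (if (i : ℕ) = (j : ℕ) then 1 else 0)

/-- construction: the X matrix -/
noncomputable def Xc (m : ℕ) (h14 : 14 ≤ m) (q : Q m) : Matrix (Fin m) (Fin m) ℂ :=
  fun i j =>
    if hi : (i : ℕ) = 0 then q.1 j
    else if (j : ℕ) = 0 then 0
    else if (j : ℕ) = m - 1 then
      (if (i : ℕ) = m - 1 then q.2.2.1 ⟨i, hi⟩ + q.1 (z0 m h14) - q.2.1 (z0 m h14)
       else q.2.2.1 ⟨i, hi⟩ + (∑ l, q.1 l * omf m (l : ℕ) (i : ℕ))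
            - (∑ l, q.2.1 l * omf m (i : ℕ) (l : ℕ)))
    else if (i : ℕ) = m - 1 then 0
    else Yc m h14 q i j + (q.1 (z0 m h14) - q.2.1 (z0 m h14)) * (if (i : ℕ) = (j : ℕ) then 1 else 0)

/-- construction: the Z matrix -/
noncomputable def Zc (m : ℕ) (h14 : 14 ≤ m) (q : Q m) : Matrix (Fin m) (Fin m) ℂ :=
  fun k j =>
    if (j : ℕ) = 0 then -q.1 k - q.2.1 k
    else -(Yc m h14 q j k) - q.1 (z0 m h14) * (if (j : ℕ) = (k : ℕ) then 1 else 0)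
         - (if (k : ℕ) = m - 1 then ∑ l, q.1 l * omf m (l : ℕ) (j : ℕ) else 0)

/-- the linear functional reading W = Y·Ω -/
noncomputable def Wm (m : ℕ) (Y : Matrix (Fin m) (Fin m) ℂ) (i j : Fin m) : ℂ :=
  ∑ l, Y i l * omf m (l : ℕ) (j : ℕ)

def emb (m : ℕ) : Fin (m - 2) → Fin m := fun i => ⟨(i : ℕ) + 1, by omega⟩

/-- double sum collapse via Ω² = -1 -/
lemma sum_sum_omsq (h14 : 14 ≤ m) (he : m % 2 = 0) (g : Fin m → ℂ) {j : Fin m}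
    (hj1 : 1 ≤ (j : ℕ)) (hj2 : (j : ℕ) ≤ m - 2) :
    (∑ l : Fin m, (∑ t', g t' * omf m (t' : ℕ) (l : ℕ)) * omf m (l : ℕ) (j : ℕ)) = -g j := by
  calc (∑ l : Fin m, (∑ t', g t' * omf m (t' : ℕ) (l : ℕ)) * omf m (l : ℕ) (j : ℕ))
      = ∑ l : Fin m, ∑ t' : Fin m, g t' * omf m (t' : ℕ) (l : ℕ) * omf m (l : ℕ) (j : ℕ) :=
        Finset.sum_congr rfl fun l _ => Finset.sum_mul _ _ _
    _ = ∑ t' : Fin m, ∑ l : Fin m, g t' * omf m (t' : ℕ) (l : ℕ) * omf m (l : ℕ) (j : ℕ) :=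
        Finset.sum_comm
    _ = ∑ t' : Fin m, g t' * ∑ l : Fin m, omf m (t' : ℕ) (l : ℕ) * omf m (l : ℕ) (j : ℕ) := by
        refine Finset.sum_congr rfl fun t' _ => ?_
        rw [Finset.mul_sum]
        exact Finset.sum_congr rfl fun l _ => by ring
    _ = ∑ t' : Fin m, (if ((t' : Fin m) : ℕ) = (j : ℕ) then -g t' else 0) := by
        refine Finset.sum_congr rfl fun t' _ => ?_
        rw [omsq h14 he (t' : ℕ) hj1 hj2]
        split_ifs <;> ring1
    _ = -g j := by rw [sum_if_val0 j.isLt]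


lemma sum_WOm (h14 : 14 ≤ m) (he : m % 2 = 0) (Y : Matrix (Fin m) (Fin m) ℂ) (i : Fin m)
    {j : Fin m} (hj1 : 1 ≤ (j : ℕ)) (hj2 : (j : ℕ) ≤ m - 2) :
    (∑ l, Wm m Y i l * omf m (l : ℕ) (j : ℕ)) = -Y i j := by
  exact sum_sum_omsq h14 he (fun t' => Y i t') hj1 hj2

end AnnT

namespace AnnT
variable {m : ℕ}

section evalLemmas
variable (h14 : 14 ≤ m) (q : Q m)

lemma Yc_row0 {i : Fin m} (j : Fin m) (hi : (i : ℕ) = 0) :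
    Yc m h14 q i j = q.2.1 j := by unfold Yc; rw [dif_pos hi]

lemma Yc_colt {i j : Fin m} (hi : (i : ℕ) ≠ 0) (hj : (j : ℕ) = m - 1) :
    Yc m h14 q i j = q.2.2.1 ⟨i, hi⟩ := by unfold Yc; rw [dif_neg hi, if_pos hj]

lemma Yc_rowt {i j : Fin m} (hi : (i : ℕ) = m - 1) (hj : (j : ℕ) ≠ m - 1) :
    Yc m h14 q i j = 0 := by
  unfold Yc; rw [dif_neg (by omega), if_neg hj, if_pos hi]

lemma Yc_col0 {i j : Fin m} (hi : (i : ℕ) ≠ 0) (hj : (j : ℕ) = 0) :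
    Yc m h14 q i j = 0 := by
  unfold Yc; rw [dif_neg hi, if_neg (by omega)]
  split_ifs <;> rfl

lemma Yc_mid {i j : Fin m} (hi1 : 1 ≤ (i : ℕ)) (hi2 : (i : ℕ) ≤ m - 2)
    (hj1 : 1 ≤ (j : ℕ)) (hj2 : (j : ℕ) ≤ m - 2) :
    Yc m h14 q i j = (-∑ l, Sy m q.2.2.2 i l * omf m (l : ℕ) (j : ℕ))
      + muv m h14 q / 2 * (if (i : ℕ) = (j : ℕ) then 1 else 0) := by
  unfold Yc; rw [dif_neg (by omega), if_neg (by omega), if_neg (by omega), if_neg (by omega)]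

lemma Xc_row0 {i : Fin m} (j : Fin m) (hi : (i : ℕ) = 0) :
    Xc m h14 q i j = q.1 j := by unfold Xc; rw [dif_pos hi]

lemma Xc_col0 {i j : Fin m} (hi : (i : ℕ) ≠ 0) (hj : (j : ℕ) = 0) :
    Xc m h14 q i j = 0 := by unfold Xc; rw [dif_neg hi, if_pos hj]

lemma Xc_colt_mid {i j : Fin m} (hi1 : 1 ≤ (i : ℕ)) (hi2 : (i : ℕ) ≤ m - 2)
    (hj : (j : ℕ) = m - 1) :
    Xc m h14 q i j = q.2.2.1 ⟨i, by omega⟩ + (∑ l, q.1 l * omf m (l : ℕ) (i : ℕ))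
      - (∑ l, q.2.1 l * omf m (i : ℕ) (l : ℕ)) := by
  unfold Xc; rw [dif_neg (by omega), if_neg (by omega), if_pos hj, if_neg (by omega)]

lemma Xc_tt {i j : Fin m} (hi : (i : ℕ) = m - 1) (hj : (j : ℕ) = m - 1) :
    Xc m h14 q i j = q.2.2.1 ⟨i, by omega⟩ + q.1 (z0 m h14) - q.2.1 (z0 m h14) := by
  unfold Xc; rw [dif_neg (by omega), if_neg (by omega), if_pos hj, if_pos hi]

lemma Xc_rowt {i j : Fin m} (hi : (i : ℕ) = m - 1) (hj0 : (j : ℕ) ≠ 0) (hjt : (j : ℕ) ≠ m - 1) :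
    Xc m h14 q i j = 0 := by
  unfold Xc; rw [dif_neg (by omega), if_neg hj0, if_neg hjt, if_pos hi]

lemma Xc_mid {i j : Fin m} (hi1 : 1 ≤ (i : ℕ)) (hi2 : (i : ℕ) ≤ m - 2)
    (hj1 : 1 ≤ (j : ℕ)) (hj2 : (j : ℕ) ≤ m - 2) :
    Xc m h14 q i j = Yc m h14 q i j
      + (q.1 (z0 m h14) - q.2.1 (z0 m h14)) * (if (i : ℕ) = (j : ℕ) then 1 else 0) := by
  unfold Xc; rw [dif_neg (by omega), if_neg (by omega), if_neg (by omega), if_neg (by omega)]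

lemma Zc_0 {j : Fin m} (k : Fin m) (hj : (j : ℕ) = 0) :
    Zc m h14 q k j = -q.1 k - q.2.1 k := by unfold Zc; rw [if_pos hj]

lemma Zc_pos {j : Fin m} (k : Fin m) (hj : (j : ℕ) ≠ 0) :
    Zc m h14 q k j = -(Yc m h14 q j k) - q.1 (z0 m h14) * (if (j : ℕ) = (k : ℕ) then 1 else 0)
      - (if (k : ℕ) = m - 1 then ∑ l, q.1 l * omf m (l : ℕ) (j : ℕ) else 0) := by
  unfold Zc; rw [if_neg hj]

end evalLemmas

/-- key computation: `W` of the constructed `Y` on the middle block. -/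
lemma Wc (h14 : 14 ≤ m) (he : m % 2 = 0) (q : Q m) {i j : Fin m}
    (hi1 : 1 ≤ (i : ℕ)) (hi2 : (i : ℕ) ≤ m - 2)
    (hj1 : 1 ≤ (j : ℕ)) (hj2 : (j : ℕ) ≤ m - 2) :
    (∑ l, Yc m h14 q i l * omf m (l : ℕ) (j : ℕ))
      = Sy m q.2.2.2 i j + muv m h14 q / 2 * omf m (i : ℕ) (j : ℕ) := by
  have point : ∀ l : Fin m, Yc m h14 q i l * omf m (l : ℕ) (j : ℕ)
      = -((∑ t', Sy m q.2.2.2 i t' * omf m (t' : ℕ) (l : ℕ)) * omf m (l : ℕ) (j : ℕ))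
        + (if (l : ℕ) = (i : ℕ) then muv m h14 q / 2 * omf m (l : ℕ) (j : ℕ) else 0) := by
    intro l
    by_cases hl0 : (l : ℕ) = 0
    · rw [hl0, omf_zero_left h14, if_neg (by omega)]; ring1
    · by_cases hlt : (l : ℕ) = m - 1
      · rw [hlt, omf_t_left h14 he, if_neg (by omega)]; ring1
      · rw [Yc_mid h14 q hi1 hi2 (by omega) (by omega)]
        split_ifs <;> (first | ring1 | (exfalso; omega))
  rw [Finset.sum_congr rfl fun l _ => point l, Finset.sum_add_distrib]
  have t1 : (∑ l : Fin m,
      -((∑ t', Sy m q.2.2.2 i t' * omf m (t' : ℕ) (l : ℕ)) * omf m (l : ℕ) (j : ℕ)))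
      = Sy m q.2.2.2 i j := by
    rw [Finset.sum_neg_distrib, sum_sum_omsq h14 he (fun t' => Sy m q.2.2.2 i t') hj1 hj2,
      neg_neg]
  have t2 : (∑ l : Fin m, if (l : ℕ) = (i : ℕ) then muv m h14 q / 2 * omf m (l : ℕ) (j : ℕ) else 0)
      = muv m h14 q / 2 * omf m (i : ℕ) (j : ℕ) :=
    sum_if_val0 i.isLt (fun l => muv m h14 q / 2 * omf m (l : ℕ) (j : ℕ))
  rw [t1, t2]

end AnnT

namespace AnnT
variable {m : ℕ}

set_option maxHeartbeats 1000000 in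
lemma EE0 (h14 : 14 ≤ m) (he : m % 2 = 0) (q : Q m) (i j k : Fin m) (hk : (k : ℕ) = 0) :
    EE m h14 (Xc m h14 q, Yc m h14 q, Zc m h14 q) i j k = 0 := by
  have hct : ¬((k : ℕ) = m - 1) := by omega
  have hmt : ¬((0 : ℕ) = m - 1) := by omega
  have hZt : Zc m h14 q k (zt m h14) = 0 := by
    rw [Zc_pos h14 q k (by rw [zt_val h14]; omega)]
    rw [Yc_rowt h14 q (zt_val h14) (by omega)]
    rw [if_neg (by rw [zt_val h14]; omega), if_neg hct]
    ring1
  unfold EE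
  dsimp only
  rw [hZt]
  have hkz : k = z0 m h14 := Fin.ext (by rw [z0_val h14]; exact hk)
  rw [hkz]
  by_cases hi0 : (i : ℕ) = 0 <;> by_cases hj0 : (j : ℕ) = 0
  · rw [Xc_row0 h14 q _ hi0, Yc_row0 h14 q _ hj0, Zc_0 h14 q _ (z0_val h14)]
    simp only [z0_val h14, hi0, hj0, hmt]
    norm_num
  · have hj0' : ¬((0 : ℕ) = (j : ℕ)) := fun h => hj0 h.symm
    rw [Zc_pos h14 q _ hj0, Yc_col0 h14 q hj0 (z0_val h14)]
    simp only [z0_val h14, hi0, hj0, hj0', hmt]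
    norm_num
  · have hi0' : ¬((0 : ℕ) = (i : ℕ)) := fun h => hi0 h.symm
    rw [Xc_col0 h14 q hi0 (z0_val h14), Zc_pos h14 q _ hi0,
      Yc_col0 h14 q hi0 (z0_val h14)]
    simp only [z0_val h14, hi0, hi0', hj0, hmt]
    norm_num
  · rw [Xc_col0 h14 q hi0 (z0_val h14), Yc_col0 h14 q hj0 (z0_val h14), z0_val h14]
    simp only [z0_val h14, hi0, hj0, hmt]
    norm_num

set_option maxHeartbeats 1000000 in
lemma EEmid (h14 : 14 ≤ m) (he : m % 2 = 0) (q : Q m) (i j k : Fin m)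
    (hk1 : 1 ≤ (k : ℕ)) (hk2 : (k : ℕ) ≤ m - 2) :
    EE m h14 (Xc m h14 q, Yc m h14 q, Zc m h14 q) i j k = 0 := by
  have hc0 : ¬((k : ℕ) = 0) := by omega
  have hct : ¬((k : ℕ) = m - 1) := by omega
  have hZt : Zc m h14 q k (zt m h14) = 0 := by
    rw [Zc_pos h14 q k (by rw [zt_val h14]; omega)]
    rw [Yc_rowt h14 q (zt_val h14) (by omega)]
    rw [if_neg (by rw [zt_val h14]; omega), if_neg hct]
    ring1
  unfold EE
  dsimp only
  rw [hZt]
  by_cases hi0 : (i : ℕ) = 0 <;> by_cases hj0 : (j : ℕ) = 0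
  · rw [Xc_row0 h14 q (z0 m h14) hi0, Xc_row0 h14 q k hi0,
      Yc_row0 h14 q (z0 m h14) hj0, Yc_row0 h14 q k hj0, Zc_0 h14 q k (z0_val h14)]
    simp only [z0_val h14, hi0, hj0, hc0, hct]
    norm_num
    try split_ifs <;> (first | ring1 | (exfalso; omega))
  · rw [Zc_pos h14 q k hj0, Xc_row0 h14 q (z0 m h14) hi0]
    simp only [z0_val h14, hi0, hj0, hc0, hct]
    norm_num
    try split_ifs <;> (first | ring1 | (exfalso; omega))
  · by_cases hit : (i : ℕ) = m - 1
    · rw [Zc_pos h14 q k hi0, Xc_rowt h14 q hit hc0 hct, Yc_rowt h14 q hit hct,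
        Yc_row0 h14 q (z0 m h14) hj0]
      simp only [z0_val h14, hi0, hit, hj0, hc0, hct]
      norm_num
      try split_ifs <;> (first | ring1 | (exfalso; omega))
    · have him1 : 1 ≤ (i : ℕ) := by omega
      have him2 : (i : ℕ) ≤ m - 2 := by omega
      rw [Zc_pos h14 q k hi0, Xc_mid h14 q him1 him2 hk1 hk2,
        Yc_row0 h14 q (z0 m h14) hj0]
      simp only [z0_val h14, hi0, hj0, hc0, hct]
      norm_num
      try split_ifs <;> (first | ring1 | (exfalso; omega))
  · rw [Xc_col0 h14 q hi0 (z0_val h14), Yc_col0 h14 q hj0 (z0_val h14)]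
    simp only [z0_val h14, hi0, hj0, hc0, hct]
    norm_num
    try split_ifs <;> (first | ring1 | (exfalso; omega))

set_option maxHeartbeats 2000000 in
lemma EEt (h14 : 14 ≤ m) (he : m % 2 = 0) (q : Q m) (i j k : Fin m)
    (hk : (k : ℕ) = m - 1) :
    EE m h14 (Xc m h14 q, Yc m h14 q, Zc m h14 q) i j k = 0 := by
  have hc0 : ¬((k : ℕ) = 0) := by omega
  have hm10 : ¬(m - 1 = 0) := by omega
  have hm10' : ¬((0:ℕ) = m - 1) := by omega
  have hZtt : Zc m h14 q k (zt m h14) =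
      -(q.2.2.1 ⟨zt m h14, by show m - 1 ≠ 0; omega⟩) - q.1 (z0 m h14) := by
    rw [Zc_pos h14 q k (by rw [zt_val h14]; omega)]
    rw [Yc_colt h14 q (by rw [zt_val h14]; omega) hk]
    rw [if_pos (show ((zt m h14 : Fin m) : ℕ) = (k : ℕ) by rw [zt_val h14, hk])]
    rw [if_pos hk]
    have : (∑ l, q.1 l * omf m (l : ℕ) ((zt m h14 : Fin m) : ℕ)) = 0 := by
      simp only [zt_val h14]
      exact sum_omf_colt h14 he q.1
    rw [this]
    ring1
  unfold EE
  dsimp only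
  rw [hZtt, if_pos hk, if_pos hk]
  by_cases hi0 : (i : ℕ) = 0 <;> by_cases hj0 : (j : ℕ) = 0
  · -- i = 0, j = 0
    have SX : (∑ l, Xc m h14 q i l * omf m (l : ℕ) (j : ℕ)) = 0 := by
      rw [Finset.sum_congr rfl fun l _ => by rw [Xc_row0 h14 q l hi0], hj0]
      exact sum_omf_col0 h14 q.1
    have SY : (∑ l, Yc m h14 q j l * omf m (i : ℕ) (l : ℕ)) = 0 := by
      rw [Finset.sum_congr rfl fun l _ => by rw [Yc_row0 h14 q l hj0], hi0]
      exact sum_omf_row0 h14 q.2.1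
    rw [SX, SY, Xc_row0 h14 q k hi0, Yc_row0 h14 q k hj0, Zc_0 h14 q k (z0_val h14),
      hi0, omf_zero_left h14]
    simp only [z0_val h14, hj0, hc0, hk, hm10, hm10']
    norm_num
    try split_ifs <;> (first | ring1 | (exfalso; omega))
  · -- i = 0, j ≠ 0
    by_cases hjt : (j : ℕ) = m - 1
    · have SX : (∑ l, Xc m h14 q i l * omf m (l : ℕ) (j : ℕ)) = 0 := by
        rw [Finset.sum_congr rfl fun l _ => by rw [Xc_row0 h14 q l hi0], hjt]
        exact sum_omf_colt h14 he q.1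
      have SY : (∑ l, Yc m h14 q j l * omf m (i : ℕ) (l : ℕ)) = 0 := by
        rw [hi0]; exact sum_omf_row0 h14 _
      have SZ : (∑ l, q.1 l * omf m (l : ℕ) (j : ℕ)) = 0 := by
        rw [hjt]; exact sum_omf_colt h14 he q.1
      rw [Zc_pos h14 q k hj0, if_pos hk, SZ, Yc_colt h14 q hj0 hk,
        Xc_row0 h14 q (z0 m h14) hi0, SX, SY, hi0, omf_zero_left h14]
      simp only [z0_val h14, hj0, hc0, hk, hjt, hm10, hm10']
      norm_num
      try split_ifs <;> (first | ring1 | (exfalso; omega))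
    · have hjm1 : 1 ≤ (j : ℕ) := by omega
      have hjm2 : (j : ℕ) ≤ m - 2 := by omega
      have SX : (∑ l, Xc m h14 q i l * omf m (l : ℕ) (j : ℕ))
          = ∑ l, q.1 l * omf m (l : ℕ) (j : ℕ) :=
        Finset.sum_congr rfl fun l _ => by rw [Xc_row0 h14 q l hi0]
      have SY : (∑ l, Yc m h14 q j l * omf m (i : ℕ) (l : ℕ)) = 0 := by
        rw [hi0]; exact sum_omf_row0 h14 _
      rw [Zc_pos h14 q k hj0, if_pos hk, Yc_colt h14 q hj0 hk, SX, SY,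
        hi0, omf_zero_left h14]
      simp only [z0_val h14, hj0, hc0, hk, hm10, hm10']
      norm_num
      try split_ifs <;> (first | ring1 | (exfalso; omega))
  · -- i ≠ 0, j = 0
    by_cases hit : (i : ℕ) = m - 1
    · have SX : (∑ l, Xc m h14 q i l * omf m (l : ℕ) (j : ℕ)) = 0 := by
        rw [hj0]; exact sum_omf_col0 h14 _
      have SY : (∑ l, Yc m h14 q j l * omf m (i : ℕ) (l : ℕ)) = 0 := by
        rw [hit]; exact sum_omf_rowt h14 he _
      have SZ : (∑ l, q.1 l * omf m (l : ℕ) (i : ℕ)) = 0 := by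
        rw [hit]; exact sum_omf_colt h14 he q.1
      rw [Zc_pos h14 q k hi0, if_pos hk, SZ, Yc_colt h14 q hi0 hk,
        Xc_tt h14 q hit hk, Yc_row0 h14 q (z0 m h14) hj0, SX, SY,
        hj0, omf_zero_right h14]
      simp only [z0_val h14, hi0, hc0, hk, hit, hm10, hm10']
      norm_num
      try split_ifs <;> (first | ring1 | (exfalso; omega))
    · have him1 : 1 ≤ (i : ℕ) := by omega
      have him2 : (i : ℕ) ≤ m - 2 := by omega
      have SX : (∑ l, Xc m h14 q i l * omf m (l : ℕ) (j : ℕ)) = 0 := by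
        rw [hj0]; exact sum_omf_col0 h14 _
      have SY : (∑ l, Yc m h14 q j l * omf m (i : ℕ) (l : ℕ))
          = ∑ l, q.2.1 l * omf m (i : ℕ) (l : ℕ) :=
        Finset.sum_congr rfl fun l _ => by rw [Yc_row0 h14 q l hj0]
      rw [Zc_pos h14 q k hi0, if_pos hk, Yc_colt h14 q hi0 hk,
        Xc_colt_mid h14 q him1 him2 hk, Yc_row0 h14 q (z0 m h14) hj0, SX, SY,
        hj0, omf_zero_right h14]
      simp only [z0_val h14, hi0, hc0, hk, hm10, hm10']
      norm_num
      try split_ifs <;> (first | ring1 | (exfalso; omega))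
  · -- i ≠ 0, j ≠ 0
    by_cases hit : (i : ℕ) = m - 1 <;> by_cases hjt : (j : ℕ) = m - 1
    · -- i = t, j = t
      have SX : (∑ l, Xc m h14 q i l * omf m (l : ℕ) (j : ℕ)) = 0 := by
        rw [hjt]; exact sum_omf_colt h14 he _
      have SY : (∑ l, Yc m h14 q j l * omf m (i : ℕ) (l : ℕ)) = 0 := by
        rw [hit]; exact sum_omf_rowt h14 he _
      rw [SX, SY, Xc_col0 h14 q hi0 (z0_val h14), Yc_col0 h14 q hj0 (z0_val h14),
        hit, omf_t_left h14 he]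
      simp only [z0_val h14, hi0, hj0, hc0, hk, hjt, hm10, hm10']
      norm_num
      try split_ifs <;> (first | ring1 | (exfalso; omega))
    · -- i = t, j mid
      have SX : (∑ l, Xc m h14 q i l * omf m (l : ℕ) (j : ℕ)) = 0 := by
        rw [Finset.sum_congr rfl fun l _ => ?_]
        · exact Finset.sum_const_zero
        · by_cases hl0 : (l : ℕ) = 0
          · rw [Xc_col0 h14 q hi0 hl0, zero_mul]
          · by_cases hlt : (l : ℕ) = m - 1
            · rw [hlt, omf_t_left h14 he, mul_zero]
            · rw [Xc_rowt h14 q hit hl0 hlt, zero_mul]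
      have SY : (∑ l, Yc m h14 q j l * omf m (i : ℕ) (l : ℕ)) = 0 := by
        rw [hit]; exact sum_omf_rowt h14 he _
      rw [SX, SY, Yc_col0 h14 q hj0 (z0_val h14), Xc_col0 h14 q hi0 (z0_val h14),
        hit, omf_t_left h14 he]
      simp only [z0_val h14, hi0, hj0, hc0, hk, hm10, hm10']
      norm_num
      try split_ifs <;> (first | ring1 | (exfalso; omega))
    · -- i mid, j = t
      have SX : (∑ l, Xc m h14 q i l * omf m (l : ℕ) (j : ℕ)) = 0 := by
        rw [hjt]; exact sum_omf_colt h14 he _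
      have SY : (∑ l, Yc m h14 q j l * omf m (i : ℕ) (l : ℕ)) = 0 := by
        rw [Finset.sum_congr rfl fun l _ => ?_]
        · exact Finset.sum_const_zero
        · by_cases hlt : (l : ℕ) = m - 1
          · rw [hlt, omf_t_right h14 he, mul_zero]
          · rw [Yc_rowt h14 q hjt hlt, zero_mul]
      rw [SX, SY, Xc_col0 h14 q hi0 (z0_val h14), Yc_col0 h14 q hj0 (z0_val h14),
        hjt, omf_t_right h14 he]
      simp only [z0_val h14, hi0, hj0, hc0, hk, hm10, hm10']
      norm_num
      try split_ifs <;> (first | ring1 | (exfalso; omega))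
    · -- i mid, j mid : symplectic core
      have him1 : 1 ≤ (i : ℕ) := by omega
      have him2 : (i : ℕ) ≤ m - 2 := by omega
      have hjm1 : 1 ≤ (j : ℕ) := by omega
      have hjm2 : (j : ℕ) ≤ m - 2 := by omega
      have SX : (∑ l, Xc m h14 q i l * omf m (l : ℕ) (j : ℕ))
          = Sy m q.2.2.2 i j + muv m h14 q / 2 * omf m (i : ℕ) (j : ℕ)
            + (q.1 (z0 m h14) - q.2.1 (z0 m h14)) * omf m (i : ℕ) (j : ℕ) := by
        have pw : ∀ l : Fin m, Xc m h14 q i l * omf m (l : ℕ) (j : ℕ)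
            = Yc m h14 q i l * omf m (l : ℕ) (j : ℕ)
              + (if (l : ℕ) = (i : ℕ) then
                  (q.1 (z0 m h14) - q.2.1 (z0 m h14)) * omf m (l : ℕ) (j : ℕ) else 0) := by
          intro l
          by_cases hl0 : (l : ℕ) = 0
          · rw [Xc_col0 h14 q (by omega) hl0, Yc_col0 h14 q (by omega) hl0,
              if_neg (by omega)]
            ring1
          · by_cases hlt : (l : ℕ) = m - 1
            · rw [hlt, omf_t_left h14 he, if_neg (by omega)]
              ring1
            · rw [Xc_mid h14 q him1 him2 (by omega) (by omega)]
              split_ifs <;> (first | ring1 | (exfalso; omega))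
        rw [Finset.sum_congr rfl fun l _ => pw l, Finset.sum_add_distrib,
          sum_if_val0 i.isLt
            (fun l => (q.1 (z0 m h14) - q.2.1 (z0 m h14)) * omf m (l : ℕ) (j : ℕ)),
          Wc h14 he q him1 him2 hjm1 hjm2]
      have SY : (∑ l, Yc m h14 q j l * omf m (i : ℕ) (l : ℕ))
          = -(Sy m q.2.2.2 i j) + muv m h14 q / 2 * omf m (i : ℕ) (j : ℕ) := by
        have pw : ∀ l : Fin m, Yc m h14 q j l * omf m (i : ℕ) (l : ℕ)
            = -(Yc m h14 q j l * omf m (l : ℕ) (i : ℕ)) := by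
          intro l
          rw [omf_antisymm (i : ℕ) (l : ℕ)]
          ring1
        rw [Finset.sum_congr rfl fun l _ => pw l, Finset.sum_neg_distrib,
          Wc h14 he q hjm1 hjm2 him1 him2, Sy_symm, omf_antisymm ((j : ℕ)) ((i : ℕ))]
        ring1
      rw [SX, SY]
      unfold muv
      simp only [z0_val h14, hi0, hj0, hc0, hk, hm10, hm10']
      norm_num
      try split_ifs <;> (first | ring1 | (exfalso; omega))

theorem constr_mem (h14 : 14 ≤ m) (he : m % 2 = 0) (q : Q m) (i j k : Fin m) :
    EE m h14 (Xc m h14 q, Yc m h14 q, Zc m h14 q) i j k = 0 := by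
  rcases Nat.lt_or_ge (k : ℕ) 1 with h | h
  · exact EE0 h14 he q i j k (by omega)
  · rcases Nat.lt_or_ge (k : ℕ) (m - 1) with h2 | h2
    · exact EEmid h14 he q i j k h (by omega)
    · exact EEt h14 he q i j k (by omega)

end AnnT

namespace AnnT
variable {m : ℕ}

set_option maxHeartbeats 4000000 in
/-- A kernel element whose free parameters vanish is zero. -/
theorem ker_zero (h14 : 14 ≤ m) (he : m % 2 = 0)
    (X Y Z : Matrix (Fin m) (Fin m) ℂ)
    (hp : ∀ i j k, EE m h14 (X, Y, Z) i j k = 0)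
    (hX0 : ∀ j, X (z0 m h14) j = 0) (hY0 : ∀ j, Y (z0 m h14) j = 0)
    (hYt : ∀ i : Fin m, (i : ℕ) ≠ 0 → Y i (zt m h14) = 0)
    (hW : ∀ i j : Fin m, 1 ≤ (i : ℕ) → (i : ℕ) ≤ m - 2 → 1 ≤ (j : ℕ) → (j : ℕ) ≤ m - 2 →
      Wm m Y i j + Wm m Y j i = 0) :
    X = 0 ∧ Y = 0 ∧ Z = 0 := by
  have hm10 : ¬((m : ℕ) - 1 = 0) := by omega
  have hm10' : ¬((0 : ℕ) = m - 1) := by omega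
  set i1 : Fin m := ⟨1, by omega⟩ with hi1
  set ih : Fin m := ⟨m / 2, by omega⟩ with hih
  have v1 : (i1 : ℕ) = 1 := rfl
  have vh : (ih : ℕ) = m / 2 := rfl
  -- D0 : Z z0 zt = 0
  have D0 : Z (z0 m h14) (zt m h14) = 0 := by
    have E := hp i1 ih (z0 m h14)
    unfold EE at E
    dsimp only at E
    simp only [z0_val h14, zt_val h14, v1, vh, omf_one_h h14] at E
    norm_num at E
    split_ifs at E <;> (first | (exfalso; omega) | linear_combination E)
  -- D1 : Y j z0 + Z z0 j = 0 for j ≠ 0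
  have D1 : ∀ j : Fin m, (j : ℕ) ≠ 0 → Y j (z0 m h14) + Z (z0 m h14) j = 0 := by
    intro j hj
    have E := hp (z0 m h14) j (z0 m h14)
    unfold EE at E
    dsimp only at E
    rw [z0_val h14] at E
    simp only [z0_val h14, zt_val h14, omf_zero_left h14] at E
    norm_num at E
    split_ifs at E <;> (first | (exfalso; omega) | linear_combination E)
  -- D2 : X i z0 + Z z0 i = 0 for i ≠ 0
  have D2 : ∀ i : Fin m, (i : ℕ) ≠ 0 → X i (z0 m h14) + Z (z0 m h14) i = 0 := by
    intro i hi
    have E := hp i (z0 m h14) (z0 m h14)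
    unfold EE at E
    dsimp only at E
    rw [z0_val h14] at E
    simp only [z0_val h14, zt_val h14, omf_zero_right h14] at E
    norm_num at E
    split_ifs at E <;> (first | (exfalso; omega) | linear_combination E)
  -- D3 : X k z0 + Y k z0 = 0 for k mid
  have D3 : ∀ k : Fin m, 1 ≤ (k : ℕ) → (k : ℕ) ≤ m - 2 →
      X k (z0 m h14) + Y k (z0 m h14) = 0 := by
    intro k hk1 hk2
    have E := hp k k k
    unfold EE at E
    dsimp only at E
    simp only [z0_val h14, zt_val h14, omf_diag] at E
    norm_num at E
    split_ifs at E <;> (first | (exfalso; omega) | linear_combination E)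
  -- A : first columns vanish
  have AX : ∀ i : Fin m, (i : ℕ) ≠ 0 → X i (z0 m h14) = 0 := by
    intro i hi
    by_cases hit : (i : ℕ) = m - 1
    · have h1 := D2 i hi
      have h2 : Z (z0 m h14) i = Z (z0 m h14) (zt m h14) := by
        congr 1
        exact Fin.ext (by rw [zt_val h14]; exact hit)
      rw [h2, D0] at h1
      linear_combination h1
    · have h1 := D1 i hi
      have h2 := D2 i hi
      have h3 := D3 i (by omega) (by omega)
      linear_combination (h2 + h3 - h1) / 2
  have AY : ∀ i : Fin m, (i : ℕ) ≠ 0 → Y i (z0 m h14) = 0 := by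
    intro i hi
    by_cases hit : (i : ℕ) = m - 1
    · have h1 := D1 i hi
      have h2 : Z (z0 m h14) i = Z (z0 m h14) (zt m h14) := by
        congr 1
        exact Fin.ext (by rw [zt_val h14]; exact hit)
      rw [h2, D0] at h1
      linear_combination h1
    · have h1 := D1 i hi
      have h2 := D2 i hi
      have h3 := D3 i (by omega) (by omega)
      linear_combination (h1 + h3 - h2) / 2
  -- B : Z k zt = 0 for k mid
  have B : ∀ k : Fin m, 1 ≤ (k : ℕ) → (k : ℕ) ≤ m - 2 → Z k (zt m h14) = 0 := by
    intro k hk1 hk2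
    have E := hp i1 ih k
    unfold EE at E
    dsimp only at E
    rw [AX i1 (by rw [v1]; omega), AY ih (by rw [vh]; omega)] at E
    simp only [z0_val h14, zt_val h14, v1, vh, omf_one_h h14] at E
    norm_num at E
    split_ifs at E <;> (first | (exfalso; omega) | linear_combination E)
  -- C0 : Z row 0 vanishes
  have C0 : ∀ j : Fin m, Z (z0 m h14) j = 0 := by
    intro j
    by_cases hj : (j : ℕ) = 0
    · have hjz : j = z0 m h14 := Fin.ext (by rw [z0_val h14]; exact hj)
      rw [hjz]
      have E := hp (z0 m h14) (z0 m h14) (z0 m h14)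
      unfold EE at E
      dsimp only at E
      rw [hX0 (z0 m h14), hY0 (z0 m h14)] at E
      rw [z0_val h14] at E
      simp only [z0_val h14, zt_val h14, omf_zero_left h14] at E
      norm_num at E
      split_ifs at E <;> (first | (exfalso; omega) | linear_combination E)
    · have h1 := D1 j hj
      have h2 := AY j hj
      linear_combination h1 - h2
  -- XY : X i k = Y i k for i ≠ 0, k mid
  have XY : ∀ i k : Fin m, (i : ℕ) ≠ 0 → 1 ≤ (k : ℕ) → (k : ℕ) ≤ m - 2 →
      X i k = Y i k := by
    intro i k hi hk1 hk2
    have E5 := hp (z0 m h14) i k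
    unfold EE at E5
    dsimp only at E5
    rw [hX0 (z0 m h14)] at E5
    simp only [z0_val h14, zt_val h14, omf_zero_left h14] at E5
    norm_num at E5
    have E6 := hp i (z0 m h14) k
    unfold EE at E6
    dsimp only at E6
    rw [hY0 (z0 m h14)] at E6
    simp only [z0_val h14, zt_val h14, omf_zero_right h14] at E6
    norm_num at E6
    split_ifs at E5 <;> split_ifs at E6 <;>
      (first | (exfalso; omega) | linear_combination E6 - E5)
  -- Yzt_row : Y zt k = 0 for k mid
  have Yzt : ∀ k : Fin m, 1 ≤ (k : ℕ) → (k : ℕ) ≤ m - 2 → Y (zt m h14) k = 0 := by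
    intro k hk1 hk2
    have E := hp (z0 m h14) (zt m h14) k
    unfold EE at E
    dsimp only at E
    rw [hX0 (z0 m h14), B k hk1 hk2] at E
    rw [z0_val h14, zt_val h14] at E
    simp only [z0_val h14, zt_val h14, omf_zero_left h14] at E
    norm_num at E
    split_ifs at E <;> (first | (exfalso; omega) | linear_combination E)
  -- Ztt : Z zt zt = 0
  have SX0 : ∀ (j : Fin m), (∑ l, X (z0 m h14) l * omf m (l : ℕ) (j : ℕ)) = 0 := by
    intro j
    rw [Finset.sum_congr rfl fun l _ => by rw [hX0 l, zero_mul]]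
    exact Finset.sum_const_zero
  have SY0 : ∀ (ii j : Fin m), (∑ l, Y (z0 m h14) l * omf m (ii : ℕ) (l : ℕ)) = 0 := by
    intro ii j
    rw [Finset.sum_congr rfl fun l _ => by rw [hY0 l, zero_mul]]
    exact Finset.sum_const_zero
  have Ztt : Z (zt m h14) (zt m h14) = 0 := by
    have E := hp (z0 m h14) (zt m h14) (zt m h14)
    unfold EE at E
    dsimp only at E
    rw [hX0 (z0 m h14), SX0 (zt m h14), hYt (zt m h14) (by rw [zt_val h14]; omega)] at E
    rw [show (∑ l, Y (zt m h14) l * omf m ((z0 m h14 : Fin m) : ℕ) (l : ℕ)) = 0 from by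
      simp only [z0_val h14]; exact sum_omf_row0 h14 _] at E
    simp only [z0_val h14, zt_val h14, omf_zero_left h14] at E
    norm_num at E
    split_ifs at E <;> (first | (exfalso; omega) | linear_combination E)
  -- W relation and vanishing
  have Wrel : ∀ i j : Fin m, 1 ≤ (i : ℕ) → (i : ℕ) ≤ m - 2 → 1 ≤ (j : ℕ) → (j : ℕ) ≤ m - 2 →
      Wm m Y i j - Wm m Y j i = 0 := by
    intro i j hi1 hi2 hj1 hj2
    have E := hp i j (zt m h14)
    unfold EE at E
    dsimp only at E
    rw [Ztt] at E
    have SXW : (∑ l, X i l * omf m (l : ℕ) (j : ℕ)) = Wm m Y i j := by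
      refine Finset.sum_congr rfl fun l _ => ?_
      by_cases hl0 : (l : ℕ) = 0
      · rw [hl0, omf_zero_left h14]; ring1
      · by_cases hlt : (l : ℕ) = m - 1
        · rw [hlt, omf_t_left h14 he]; ring1
        · rw [XY i l (by omega) (by omega) (by omega)]
    have SYW : (∑ l, Y j l * omf m (i : ℕ) (l : ℕ)) = -Wm m Y j i := by
      rw [show -Wm m Y j i = ∑ l, -(Y j l * omf m (l : ℕ) (i : ℕ)) from
        (Finset.sum_neg_distrib _).symm]
      refine Finset.sum_congr rfl fun l _ => ?_
      rw [omf_antisymm (i : ℕ) (l : ℕ)]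
      ring1
    rw [SXW, SYW] at E
    rw [zt_val h14] at E
    simp only [z0_val h14, zt_val h14] at E
    norm_num at E
    split_ifs at E <;> (first | (exfalso; omega) | linear_combination E)
  have W0 : ∀ i j : Fin m, 1 ≤ (i : ℕ) → (i : ℕ) ≤ m - 2 → 1 ≤ (j : ℕ) → (j : ℕ) ≤ m - 2 →
      Wm m Y i j = 0 := by
    intro i j hi1 hi2 hj1 hj2
    have h1 := hW i j hi1 hi2 hj1 hj2
    have h2 := Wrel i j hi1 hi2 hj1 hj2
    linear_combination (h1 + h2) / 2
  -- Y vanishes on the middle block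
  have Ymid : ∀ i j : Fin m, 1 ≤ (i : ℕ) → (i : ℕ) ≤ m - 2 → 1 ≤ (j : ℕ) → (j : ℕ) ≤ m - 2 →
      Y i j = 0 := by
    intro i j hi1 hi2 hj1 hj2
    have SW := sum_WOm h14 he Y i hj1 hj2
    have S0 : (∑ l, Wm m Y i l * omf m (l : ℕ) (j : ℕ)) = 0 := by
      rw [Finset.sum_congr rfl fun l _ => ?_]
      · exact Finset.sum_const_zero
      · by_cases hl0 : (l : ℕ) = 0
        · rw [hl0, omf_zero_left h14, mul_zero]
        · by_cases hlt : (l : ℕ) = m - 1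
          · rw [hlt, omf_t_left h14 he, mul_zero]
          · rw [W0 i l hi1 hi2 (by omega) (by omega), zero_mul]
    rw [S0] at SW
    linear_combination SW
  -- Y = 0 everywhere
  have Yall : ∀ a b : Fin m, Y a b = 0 := by
    intro a b
    by_cases ha0 : (a : ℕ) = 0
    · have : a = z0 m h14 := Fin.ext (by rw [z0_val h14]; exact ha0)
      rw [this]; exact hY0 b
    · by_cases hb0 : (b : ℕ) = 0
      · have : b = z0 m h14 := Fin.ext (by rw [z0_val h14]; exact hb0)
        rw [this]; exact AY a ha0
      · by_cases hbt : (b : ℕ) = m - 1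
        · have : b = zt m h14 := Fin.ext (by rw [zt_val h14]; exact hbt)
          rw [this]; exact hYt a ha0
        · by_cases hat : (a : ℕ) = m - 1
          · have : a = zt m h14 := Fin.ext (by rw [zt_val h14]; exact hat)
            rw [this]; exact Yzt b (by omega) (by omega)
          · exact Ymid a b (by omega) (by omega) (by omega) (by omega)
  -- Z column entries at row zt
  have Zzt_col : ∀ i : Fin m, (i : ℕ) ≠ 0 → Z (zt m h14) i = 0 := by
    intro i hi
    have E := hp (z0 m h14) i (zt m h14)
    unfold EE at E
    dsimp only at E
    rw [hX0 (z0 m h14), SX0 i, Yall i (zt m h14)] at E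
    rw [show (∑ l, Y i l * omf m ((z0 m h14 : Fin m) : ℕ) (l : ℕ)) = 0 from by
      simp only [z0_val h14]; exact sum_omf_row0 h14 _] at E
    rw [z0_val h14, zt_val h14] at E
    simp only [z0_val h14, zt_val h14, omf_zero_left h14] at E
    norm_num at E
    split_ifs at E <;> (first | (exfalso; omega) | linear_combination E)
  -- X column zt
  have Xzt : ∀ i : Fin m, (i : ℕ) ≠ 0 → X i (zt m h14) = 0 := by
    intro i hi
    have E := hp i (z0 m h14) (zt m h14)
    unfold EE at E
    dsimp only at E
    rw [hY0 (z0 m h14), Zzt_col i hi] at E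
    rw [show (∑ l, X i l * omf m (l : ℕ) ((z0 m h14 : Fin m) : ℕ)) = 0 from by
      simp only [z0_val h14]; exact sum_omf_col0 h14 _] at E
    rw [show (∑ l, Y (z0 m h14) l * omf m (i : ℕ) (l : ℕ)) = 0 from by
      rw [Finset.sum_congr rfl fun l _ => by rw [hY0 l, zero_mul]]
      exact Finset.sum_const_zero] at E
    rw [z0_val h14, zt_val h14] at E
    simp only [z0_val h14, zt_val h14, omf_zero_right h14] at E
    norm_num at E
    split_ifs at E <;> (first | (exfalso; omega) | linear_combination E)
  -- X = 0 everywhere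
  have Xall : ∀ a b : Fin m, X a b = 0 := by
    intro a b
    by_cases ha0 : (a : ℕ) = 0
    · have : a = z0 m h14 := Fin.ext (by rw [z0_val h14]; exact ha0)
      rw [this]; exact hX0 b
    · by_cases hb0 : (b : ℕ) = 0
      · have : b = z0 m h14 := Fin.ext (by rw [z0_val h14]; exact hb0)
        rw [this]; exact AX a ha0
      · by_cases hbt : (b : ℕ) = m - 1
        · have : b = zt m h14 := Fin.ext (by rw [zt_val h14]; exact hbt)
          rw [this]; exact Xzt a ha0
        · rw [XY a b ha0 (by omega) (by omega)]
          exact Yall a b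
  -- remaining Z entries
  have Zmid : ∀ k j : Fin m, 1 ≤ (k : ℕ) → (k : ℕ) ≤ m - 2 → Z k j = 0 := by
    intro k j hk1 hk2
    by_cases hj0 : (j : ℕ) = 0
    · have hjz : j = z0 m h14 := Fin.ext (by rw [z0_val h14]; exact hj0)
      rw [hjz]
      have E := hp (z0 m h14) (z0 m h14) k
      unfold EE at E
      dsimp only at E
      rw [hX0 k, hY0 k] at E
      simp only [z0_val h14, zt_val h14, omf_zero_left h14] at E
      norm_num at E
      split_ifs at E <;> (first | (exfalso; omega) | linear_combination E)
    · have E := hp (z0 m h14) j k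
      unfold EE at E
      dsimp only at E
      rw [hX0 (z0 m h14), Yall j k] at E
      simp only [z0_val h14, zt_val h14, omf_zero_left h14] at E
      norm_num at E
      split_ifs at E <;> (first | (exfalso; omega) | linear_combination E)
  have Zt0 : Z (zt m h14) (z0 m h14) = 0 := by
    have E := hp (z0 m h14) (z0 m h14) (zt m h14)
    unfold EE at E
    dsimp only at E
    rw [hX0 (zt m h14), hY0 (zt m h14), SX0 (z0 m h14)] at E
    rw [show (∑ l, Y (z0 m h14) l * omf m ((z0 m h14 : Fin m) : ℕ) (l : ℕ)) = 0 from by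
      simp only [z0_val h14]; exact sum_omf_row0 h14 _] at E
    simp only [z0_val h14, zt_val h14, omf_zero_left h14] at E
    norm_num at E
    split_ifs at E <;> (first | (exfalso; omega) | linear_combination E)
  have Zall : ∀ a b : Fin m, Z a b = 0 := by
    intro a b
    by_cases ha0 : (a : ℕ) = 0
    · have : a = z0 m h14 := Fin.ext (by rw [z0_val h14]; exact ha0)
      rw [this]; exact C0 b
    · by_cases hat : (a : ℕ) = m - 1
      · have haz : a = zt m h14 := Fin.ext (by rw [zt_val h14]; exact hat)
        by_cases hb0 : (b : ℕ) = 0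
        · have : b = z0 m h14 := Fin.ext (by rw [z0_val h14]; exact hb0)
          rw [this, haz]; exact Zt0
        · rw [haz]; exact Zzt_col b hb0
      · exact Zmid a b (by omega) (by omega)
  refine ⟨?_, ?_, ?_⟩ <;> funext a b
  · exact Xall a b
  · exact Yall a b
  · exact Zall a b

end AnnT

namespace AnnT
variable {m : ℕ}

/-- The parameter-reading linear map. -/
noncomputable def pi0 (m : ℕ) (h14 : 14 ≤ m) :
    (Matrix (Fin m) (Fin m) ℂ × Matrix (Fin m) (Fin m) ℂ × Matrix (Fin m) (Fin m) ℂ)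
      →ₗ[ℂ] Q m where
  toFun p := (fun j => p.1 (z0 m h14) j,
              fun j => p.2.1 (z0 m h14) j,
              fun i => p.2.1 i.1 (zt m h14),
              Sym2.lift ⟨fun a b =>
                (Wm m p.2.1 (emb m a) (emb m b) + Wm m p.2.1 (emb m b) (emb m a)) / 2,
                fun a b => by ring⟩)
  map_add' p r := by
    refine Prod.ext rfl (Prod.ext rfl (Prod.ext rfl ?_))
    funext z
    induction z using Sym2.ind with
    | _ a b =>
      show (_ : ℂ) = (Sym2.lift _ _ + Sym2.lift _ _ : ℂ)
      simp only [Sym2.lift_mk, Wm, Prod.snd_add, Prod.fst_add, Matrix.add_apply,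
        add_mul, Finset.sum_add_distrib]
      ring
  map_smul' c p := by
    refine Prod.ext rfl (Prod.ext rfl (Prod.ext rfl ?_))
    funext z
    induction z using Sym2.ind with
    | _ a b =>
      show (_ : ℂ) = c • (Sym2.lift _ _ : ℂ)
      simp only [Sym2.lift_mk, Wm, Prod.smul_snd, Prod.smul_fst, Matrix.smul_apply,
        smul_eq_mul, mul_assoc, ← Finset.mul_sum]
      ring

lemma emb_val (a : Fin (m - 2)) : ((emb m a : Fin m) : ℕ) = (a : ℕ) + 1 := rfl

/-- reading the parameters of the construction gives back the parameters -/
lemma pi_sigma (h14 : 14 ≤ m) (he : m % 2 = 0) (q : Q m) :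
    pi0 m h14 (Xc m h14 q, Yc m h14 q, Zc m h14 q) = q := by
  have hmemb : ∀ a : Fin (m - 2), 1 ≤ ((emb m a : Fin m) : ℕ) ∧ ((emb m a : Fin m) : ℕ) ≤ m - 2 := by
    intro a
    rw [emb_val]
    have := a.isLt
    omega
  refine Prod.ext ?_ (Prod.ext ?_ (Prod.ext ?_ ?_))
  · funext j
    exact Xc_row0 h14 q j (z0_val h14)
  · funext j
    exact Yc_row0 h14 q j (z0_val h14)
  · funext i
    show Yc m h14 q i.1 (zt m h14) = q.2.2.1 i
    rw [Yc_colt h14 q i.2 (zt_val h14)]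
  · funext z
    induction z using Sym2.ind with
    | _ a b =>
      show (Wm m (Yc m h14 q) (emb m a) (emb m b) + Wm m (Yc m h14 q) (emb m b) (emb m a)) / 2
        = q.2.2.2 (Sym2.mk a b)
      unfold Wm
      rw [Wc h14 he q (hmemb a).1 (hmemb a).2 (hmemb b).1 (hmemb b).2,
        Wc h14 he q (hmemb b).1 (hmemb b).2 (hmemb a).1 (hmemb a).2,
        Sy_symm q.2.2.2 (emb m b) (emb m a),
        omf_antisymm ((emb m b : Fin m) : ℕ) ((emb m a : Fin m) : ℕ)]
      have hSy : Sy m q.2.2.2 (emb m a) (emb m b) = q.2.2.2 (Sym2.mk a b) := by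
        unfold Sy
        rw [dif_pos ⟨hmemb a, hmemb b⟩]
        refine congrArg q.2.2.2 (congrArg₂ Sym2.mk ?_ ?_)
        all_goals
          exact Fin.ext (by simp only [emb_val]; omega)
      rw [hSy]
      ring
end AnnT


namespace AnnT

set_option maxHeartbeats 1000000 in
theorem main_count (m : ℕ) (h14 : 14 ≤ m) (he : m % 2 = 0) (h0 : 0 < m) :
    Module.finrank ℂ (LinearMap.ker (tensorActionL m m m (TmaxEven m h0)))
      = m ^ 2 / 2 + 3 * m / 2 := by
  classical
  set L := tensorActionL m m m (TmaxEven m h0) with hL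
  let π : ↥(LinearMap.ker L) →ₗ[ℂ] Q m := (pi0 m h14).comp (LinearMap.ker L).subtype
  have hπ : ∀ a : ↥(LinearMap.ker L), π a = pi0 m h14 a.1 := fun a => rfl
  have hinj : Function.Injective π := by
    rw [injective_iff_map_eq_zero]
    intro a ha
    rw [hπ] at ha
    have hmem := a.2
    rw [LinearMap.mem_ker] at hmem
    have hp : ∀ i j k, EE m h14 a.1 i j k = 0 := by
      have := (ker_iff h14 h0 a.1).mp (LinearMap.mem_ker.mpr hmem)
      exact this
    have h1 : ∀ j, a.1.1 (z0 m h14) j = 0 := fun j => congrFun (congrArg Prod.fst ha) j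
    have h2 : ∀ j, a.1.2.1 (z0 m h14) j = 0 :=
      fun j => congrFun (congrArg (fun x : Q m => x.2.1) ha) j
    have h3 : ∀ i : Fin m, (i : ℕ) ≠ 0 → a.1.2.1 i (zt m h14) = 0 := fun i hi =>
      congrFun (congrArg (fun x : Q m => x.2.2.1) ha) ⟨i, hi⟩
    have h4' := congrArg (fun x : Q m => x.2.2.2) ha
    have h4 : ∀ i j : Fin m, 1 ≤ (i : ℕ) → (i : ℕ) ≤ m - 2 → 1 ≤ (j : ℕ) → (j : ℕ) ≤ m - 2 →
        Wm m a.1.2.1 i j + Wm m a.1.2.1 j i = 0 := by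
      intro i j hi1 hi2 hj1 hj2
      have ea : emb m ⟨(i : ℕ) - 1, by omega⟩ = i :=
        Fin.ext (by simp only [emb_val]; omega)
      have eb : emb m ⟨(j : ℕ) - 1, by omega⟩ = j :=
        Fin.ext (by simp only [emb_val]; omega)
      have h5 : (Wm m a.1.2.1 (emb m ⟨(i : ℕ) - 1, by omega⟩) (emb m ⟨(j : ℕ) - 1, by omega⟩)
          + Wm m a.1.2.1 (emb m ⟨(j : ℕ) - 1, by omega⟩) (emb m ⟨(i : ℕ) - 1, by omega⟩)) / 2
          = 0 :=
        congrFun h4' (Sym2.mk ⟨(i : ℕ) - 1, by omega⟩ ⟨(j : ℕ) - 1, by omega⟩)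
      rw [ea, eb] at h5
      linear_combination 2 * h5
    obtain ⟨hX, hY, hZ⟩ := ker_zero h14 he a.1.1 a.1.2.1 a.1.2.2 hp h1 h2 h3 h4
    apply Subtype.ext
    show a.1 = 0
    exact Prod.ext hX (Prod.ext hY hZ)
  have hsurj : Function.Surjective π := by
    intro qq
    refine ⟨⟨(Xc m h14 qq, Yc m h14 qq, Zc m h14 qq), ?_⟩, ?_⟩
    · rw [ker_iff h14 h0]
      intro i j k
      exact constr_mem h14 he qq i j k
    · rw [hπ]
      exact pi_sigma h14 he qq
  have efr := (LinearEquiv.ofBijective π ⟨hinj, hsurj⟩).finrank_eq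
  rw [efr]
  have c1 : Fintype.card {i : Fin m // (i : ℕ) ≠ 0} = m - 1 := by
    have hone : Fintype.card {i : Fin m // (i : ℕ) = 0} = 1 := by
      rw [Fintype.card_eq_one_iff]
      refine ⟨⟨⟨0, by omega⟩, rfl⟩, ?_⟩
      rintro ⟨x, hx⟩
      exact Subtype.ext (Fin.ext hx)
    have h2 := Fintype.card_subtype_compl (fun i : Fin m => (i : ℕ) = 0)
    rw [hone, Fintype.card_fin] at h2
    exact h2
  have c2 : Fintype.card (Sym2 (Fin (m - 2))) = (m - 2) * (m - 1) / 2 := by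
    rw [Sym2.card, Fintype.card_fin, Nat.choose_two_right,
      show m - 2 + 1 = m - 1 from by omega, Nat.mul_comm,
      show m - 1 - 1 = m - 2 from by omega]
  have hQ : Module.finrank ℂ (Q m) = m + (m + ((m - 1) + (m - 2) * (m - 1) / 2)) := by
    simp only [Module.finrank_prod, Module.finrank_pi, Fintype.card_fin, c1, c2]
  rw [hQ]
  obtain ⟨r, hr⟩ : ∃ r, m = 2 * r + 14 := ⟨(m - 14) / 2, by omega⟩
  rw [hr]
  rw [show 2 * r + 14 - 2 = 2 * r + 12 from by omega,
    show 2 * r + 14 - 1 = 2 * r + 13 from by omega,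
    show (2 * r + 12) * (2 * r + 13) = 2 * (2 * r * r + 25 * r + 78) from by ring,
    show (2 * r + 14) ^ 2 = 2 * (2 * r * r + 28 * r + 98) from by ring,
    show 3 * (2 * r + 14) = 2 * (3 * r + 21) from by ring,
    Nat.mul_div_cancel_left _ (by norm_num : 0 < 2),
    Nat.mul_div_cancel_left _ (by norm_num : 0 < 2),
    Nat.mul_div_cancel_left _ (by norm_num : 0 < 2)]
  ring

end AnnT

/-- For `m ≥ 14` even, `dim G_{T_{max,even,m}} = m²/2 + 3m/2 − 2`; equivalently
the annihilator of `T_{max,even,m}` in `gl_m ⊕ gl_m ⊕ gl_m` has dimension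
`m²/2 + 3m/2`. -/
theorem dim_annihilator_TmaxEven (m : ℕ) (hm : 14 ≤ m) (heven : Even m) :
    Module.finrank ℂ (LinearMap.ker (tensorActionL m m m (TmaxEven m (by omega))))
      = m ^ 2 / 2 + 3 * m / 2 ∧
    Module.finrank ℂ (LinearMap.ker (tensorActionL m m m (TmaxEven m (by omega)))) - 2
      = m ^ 2 / 2 + 3 * m / 2 - 2 := by
  have he : m % 2 = 0 := Nat.even_iff.mp heven
  refine ⟨AnnT.main_count m hm he _, ?_⟩
  rw [AnnT.main_count m hm he]
end
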